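/- arXiv:2004.02642 — 4 statements merged into one kernel-verified Lean document; each statement's English description precedes it below -/
import Mathlib

section
/- Let X and Y be independent nonnegative random variables, where X has density f_X and Y has a continuous CDF F_Y with F_Y(y) = 0 for y ≤ 0. Let Px, Py, Pth, ε2, ε3, γ̄, Θ be positive reals, and assume Δ1 := (Pth·Θ − γ̄·ε2·Py)/(γ̄·ε3·Py + Px·Θ) satisfies 0 ≤ Δ1. Then Pr[ Y < γ̄·(ε2 + ε3·X)/Θ and Px·X + Py·Y ≤ Pth ] = ∫_{Δ1}^{Pth/Px} f_X(x)·F_Y((Pth − Px·x)/Py) dx + ∫_{0}^{Δ1} f_X(x)·F_Y(γ̄·(ε2 + ε3·x)/Θ) dx. -/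
open MeasureTheory Set

/-- Double-integral decomposition used to compute the CDF of the linear-regime
relay SNR jointly with the non-saturation event `Px·X + Py·Y ≤ Pth` of the
nonlinear energy harvester: the plane splits at the crossing point `Δ1` of the
lines `γ̄(ε2+ε3·x)/Θ` and `(Pth − Px·x)/Py`. -/
theorem stmt_3 {Ω : Type*} [MeasurableSpace Ω]
    (ℙ : Measure Ω) [IsProbabilityMeasure ℙ]
    (X Y : Ω → ℝ) (hmX : Measurable X) (hmY : Measurable Y)
    (hindep : ProbabilityTheory.IndepFun X Y ℙ)
    (hXpos : ∀ᵐ ω ∂ℙ, 0 ≤ X ω) (hYpos : ∀ᵐ ω ∂ℙ, 0 ≤ Y ω)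
    (fX : ℝ → ℝ)
    (hfX : ∀ s : Set ℝ, MeasurableSet s → (ℙ (X ⁻¹' s)).toReal = ∫ x in s, fX x)
    (FY : ℝ → ℝ) (hFYcont : Continuous FY)
    (hFY : ∀ y : ℝ, FY y = (ℙ {ω | Y ω ≤ y}).toReal)
    (hFY0 : ∀ y : ℝ, y ≤ 0 → FY y = 0)
    (Px Py Pth ε2 ε3 γbar Θ : ℝ)
    (hPx : 0 < Px) (hPy : 0 < Py) (hPth : 0 < Pth)
    (hε2 : 0 < ε2) (hε3 : 0 < ε3) (hγ : 0 < γbar) (hΘ : 0 < Θ)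
    (Δ1 : ℝ) (hΔ1 : Δ1 = (Pth * Θ - γbar * ε2 * Py) / (γbar * ε3 * Py + Px * Θ))
    (hΔ1nonneg : 0 ≤ Δ1) :
    (ℙ {ω | Y ω < γbar * (ε2 + ε3 * X ω) / Θ ∧ Px * X ω + Py * Y ω ≤ Pth}).toReal =
      (∫ x in Δ1..(Pth / Px), fX x * FY ((Pth - Px * x) / Py)) +
      ∫ x in (0 : ℝ)..Δ1, fX x * FY (γbar * (ε2 + ε3 * x) / Θ) := by
  -- notation
  set T : ℝ := Pth / Px with hTdef
  have hT : 0 < T := div_pos hPth hPx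
  set g : ℝ → ℝ := fun x => γbar * (ε2 + ε3 * x) / Θ with hgdef
  set h : ℝ → ℝ := fun x => (Pth - Px * x) / Py with hhdef
  set φ : ℝ → ℝ := fun x => FY (min (g x) (h x)) with hφdef
  have hgcont : Continuous g := by
    apply Continuous.div_const
    fun_prop
  have hhcont : Continuous h := by
    apply Continuous.div_const
    fun_prop
  have hφcont : Continuous φ := hFYcont.comp (hgcont.min hhcont)
  set μX := ℙ.map X with hμX
  set μY := ℙ.map Y with hμY
  haveI : IsProbabilityMeasure μX := Measure.isProbabilityMeasure_map hmX.aemeasurable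
  haveI : IsProbabilityMeasure μY := Measure.isProbabilityMeasure_map hmY.aemeasurable
  -- CDF facts
  have hFYnn : ∀ c, 0 ≤ FY c := fun c => by rw [hFY]; exact ENNReal.toReal_nonneg
  have hFYle1 : ∀ c, FY c ≤ 1 := by
    intro c
    rw [hFY]
    have h1 : ℙ {ω | Y ω ≤ c} ≤ 1 := prob_le_one
    have := ENNReal.toReal_mono ENNReal.one_ne_top h1
    simpa using this
  have hFYmu : ∀ c, μY (Iic c) = ENNReal.ofReal (FY c) := by
    intro c
    rw [hμY, Measure.map_apply hmY measurableSet_Iic]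
    rw [hFY c, ENNReal.ofReal_toReal (measure_ne_top ℙ _)]
    rfl
  -- no atoms for μY
  have hnoatom : ∀ c, μY (Iio c) = ENNReal.ofReal (FY c) := by
    intro c
    have hmono : Monotone (fun n : ℕ => Iic (c - 1 / ((n : ℝ) + 1))) := by
      intro n m hnm
      apply Iic_subset_Iic.2
      have h1 : (1 : ℝ) / ((m : ℝ) + 1) ≤ 1 / ((n : ℝ) + 1) := by
        apply one_div_le_one_div_of_le
        · positivity
        · have : (n : ℝ) ≤ m := Nat.cast_le.mpr hnm
          linarith
      linarith
    have hUnion : ⋃ n : ℕ, Iic (c - 1 / ((n : ℝ) + 1)) = Iio c := by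
      ext y
      simp only [mem_iUnion, mem_Iic, mem_Iio]
      constructor
      · rintro ⟨n, hn⟩
        have : (0 : ℝ) < 1 / ((n : ℝ) + 1) := by positivity
        linarith
      · intro hy
        obtain ⟨n, hn⟩ := exists_nat_one_div_lt (sub_pos.2 hy)
        exact ⟨n, by linarith⟩
    have h1 := tendsto_measure_iUnion_atTop (μ := μY) hmono
    rw [hUnion] at h1
    have h2 : Filter.Tendsto (fun n : ℕ => μY (Iic (c - 1 / ((n : ℝ) + 1))))
        Filter.atTop (nhds (ENNReal.ofReal (FY c))) := by
      have hc : Filter.Tendsto (fun n : ℕ => c - 1 / ((n : ℝ) + 1)) Filter.atTop (nhds c) := by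
        have := tendsto_one_div_add_atTop_nhds_zero_nat (𝕜 := ℝ)
        have h3 := Filter.Tendsto.sub (tendsto_const_nhds (x := c)) this
        simpa using h3
      have h4 : Filter.Tendsto (fun n : ℕ => FY (c - 1 / ((n : ℝ) + 1))) Filter.atTop
          (nhds (FY c)) := (hFYcont.tendsto c).comp hc
      have h5 := (ENNReal.continuous_ofReal.tendsto (FY c)).comp h4
      simp only [Function.comp_def] at h5 ⊢
      convert h5 using 2 with n
      exact hFYmu _
    exact tendsto_nhds_unique h1 h2
  have hnoatom' : ∀ c, μY (Iio c) = μY (Iic c) := fun c => by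
    rw [hnoatom c, hFYmu c]
  -- the event as a product set
  set S : Set (ℝ × ℝ) :=
    {p : ℝ × ℝ | p.2 < γbar * (ε2 + ε3 * p.1) / Θ ∧ Px * p.1 + Py * p.2 ≤ Pth} with hSdef
  have hSm : MeasurableSet S := by
    have h1 : Measurable fun p : ℝ × ℝ => γbar * (ε2 + ε3 * p.1) / Θ := by fun_prop
    have h2 : Measurable fun p : ℝ × ℝ => Px * p.1 + Py * p.2 := by fun_prop
    exact (measurableSet_lt measurable_snd h1).inter (measurableSet_le h2 measurable_const)
  have hEeq : {ω | Y ω < γbar * (ε2 + ε3 * X ω) / Θ ∧ Px * X ω + Py * Y ω ≤ Pth}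
      = (fun ω => (X ω, Y ω)) ⁻¹' S := rfl
  have hstep1 : ℙ {ω | Y ω < γbar * (ε2 + ε3 * X ω) / Θ ∧ Px * X ω + Py * Y ω ≤ Pth}
      = (μX.prod μY) S := by
    rw [hEeq, ← Measure.map_apply (hmX.prodMk hmY) hSm,
      (ProbabilityTheory.indepFun_iff_map_prod_eq_prod_map_map hmX.aemeasurable
        hmY.aemeasurable).mp hindep]
  -- slices
  have hiff : ∀ x : ℝ, x ≤ Δ1 ↔ g x ≤ h x := by
    intro x
    have hD : (0 : ℝ) < γbar * ε3 * Py + Px * Θ := by positivity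
    rw [hΔ1, le_div_iff₀ hD, hgdef, hhdef]
    simp only
    rw [div_le_div_iff₀ hΘ hPy]
    constructor <;> intro hx <;> nlinarith
  have hslice : ∀ x : ℝ, μY (Prod.mk x ⁻¹' S) = ENNReal.ofReal (φ x) := by
    intro x
    have hset : Prod.mk x ⁻¹' S = {y : ℝ | y < g x ∧ y ≤ h x} := by
      ext y
      simp only [hSdef, mem_preimage, mem_setOf_eq]
      constructor
      · rintro ⟨h1, h2⟩
        exact ⟨h1, by rw [hhdef]; simp only; rw [le_div_iff₀ hPy]; nlinarith⟩
      · rintro ⟨h1, h2⟩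
        rw [hhdef] at h2; simp only at h2; rw [le_div_iff₀ hPy] at h2
        exact ⟨h1, by nlinarith⟩
    rw [hset]
    rcases le_or_gt (g x) (h x) with hgh | hgh
    · have : {y : ℝ | y < g x ∧ y ≤ h x} = Iio (g x) := by
        ext y
        simp only [mem_setOf_eq, mem_Iio]
        exact ⟨fun hy => hy.1, fun hy => ⟨hy, le_trans (le_of_lt hy) hgh⟩⟩
      rw [this, hnoatom, hφdef]
      simp only
      rw [min_eq_left hgh]
    · have : {y : ℝ | y < g x ∧ y ≤ h x} = Iic (h x) := by
        ext y
        simp only [mem_setOf_eq, mem_Iic]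
        exact ⟨fun hy => hy.2, fun hy => ⟨lt_of_le_of_lt hy hgh, hy⟩⟩
      rw [this, hFYmu, hφdef]
      simp only
      rw [min_eq_right (le_of_lt hgh)]
  -- φ facts
  have hφnn : ∀ x, 0 ≤ φ x := fun x => hFYnn _
  have hφint : Integrable φ μX := by
    refine (integrable_const (1 : ℝ)).mono' hφcont.aestronglyMeasurable
      (Filter.Eventually.of_forall fun x => ?_)
    rw [Real.norm_eq_abs, abs_of_nonneg (hφnn x)]
    exact hFYle1 _
  have hstep2 : (ℙ {ω | Y ω < γbar * (ε2 + ε3 * X ω) / Θ ∧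
      Px * X ω + Py * Y ω ≤ Pth}).toReal = ∫ x, φ x ∂μX := by
    rw [hstep1, Measure.prod_apply hSm]
    have : ∫⁻ x, μY (Prod.mk x ⁻¹' S) ∂μX = ∫⁻ x, ENNReal.ofReal (φ x) ∂μX :=
      lintegral_congr fun x => hslice x
    rw [this, ← ofReal_integral_eq_lintegral_ofReal hφint
      (Filter.Eventually.of_forall hφnn),
      ENNReal.toReal_ofReal (integral_nonneg hφnn)]
  -- density facts for X
  have hfXint : Integrable fX := by
    by_contra hcon
    have h1 := hfX univ MeasurableSet.univ
    rw [Measure.restrict_univ] at h1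
    rw [integral_undef hcon] at h1
    simp at h1
  have hfXnn : 0 ≤ᵐ[volume] fX := by
    apply ae_nonneg_of_forall_setIntegral_nonneg hfXint
    intro s hs _
    rw [← hfX s hs]
    exact ENNReal.toReal_nonneg
  have hμXd : μX = volume.withDensity (fun x => ENNReal.ofReal (fX x)) := by
    ext s hs
    rw [withDensity_apply _ hs, hμX, Measure.map_apply hmX hs,
      ← ENNReal.ofReal_toReal (measure_ne_top ℙ (X ⁻¹' s)), hfX s hs,
      ofReal_integral_eq_lintegral_ofReal hfXint.integrableOn
        (ae_restrict_of_ae hfXnn)]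
  have hkey : ∫ x, φ x ∂μX = ∫ x, fX x * φ x := by
    rw [hμXd]
    have hrw : (fun x => ENNReal.ofReal (fX x))
        = fun x => ((fun y => (fX y).toNNReal) x : ENNReal) := rfl
    have hfnn : AEMeasurable (fun y => (fX y).toNNReal) volume :=
      measurable_real_toNNReal.comp_aemeasurable hfXint.aemeasurable
    rw [hrw, integral_withDensity_eq_integral_smul₀ hfnn φ]
    apply integral_congr_ae
    filter_upwards [hfXnn] with x hx
    simp [NNReal.smul_def, Real.coe_toNNReal _ hx]
  set ψ : ℝ → ℝ := fun x => fX x * φ x with hψdef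
  have hψint : Integrable ψ := by
    refine hfXint.abs.mono' (hfXint.aestronglyMeasurable.mul hφcont.aestronglyMeasurable)
      (Filter.Eventually.of_forall fun x => ?_)
    rw [hψdef]
    simp only [Real.norm_eq_abs, abs_mul]
    calc |fX x| * |φ x| ≤ |fX x| * 1 := by
          apply mul_le_mul_of_nonneg_left _ (abs_nonneg _)
          rw [abs_of_nonneg (hφnn x)]
          exact hFYle1 _
      _ = |fX x| := mul_one _
  -- geometry: Δ1 < T
  have hhT : h T = 0 := by
    rw [hhdef]
    simp only [hTdef]
    rw [mul_div_cancel₀ _ (ne_of_gt hPx), sub_self, zero_div]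
  have hgT : 0 < g T := by
    have hT' : 0 < ε2 + ε3 * T := by nlinarith
    exact div_pos (mul_pos hγ hT') hΘ
  have hΔT : Δ1 < T := by
    by_contra hcon
    push_neg at hcon
    have := (hiff T).mp hcon
    rw [hhT] at this
    linarith
  -- kill the negative half line
  have hIio0 : ∫ x in Iio (0 : ℝ), ψ x = 0 := by
    have hnull : ℙ (X ⁻¹' Iio 0) = 0 := by
      rw [ae_iff] at hXpos
      have : X ⁻¹' Iio 0 = {ω | ¬ 0 ≤ X ω} := by
        ext ω; simp [not_le]
      rw [this]
      exact hXpos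
    have h0 : ∫ x in Iio (0 : ℝ), fX x = 0 := by
      rw [← hfX _ measurableSet_Iio, hnull]
      simp
    have hfX0 : fX =ᵐ[volume.restrict (Iio (0 : ℝ))] 0 := by
      rw [← setIntegral_eq_zero_iff_of_nonneg_ae (ae_restrict_of_ae hfXnn)
        hfXint.integrableOn]
      exact h0
    calc ∫ x in Iio (0 : ℝ), ψ x = ∫ x in Iio (0 : ℝ), (0 : ℝ) := by
          apply integral_congr_ae
          filter_upwards [hfX0] with x hx
          rw [hψdef]
          simp only [Pi.zero_apply] at hx
          simp [hx]
      _ = 0 := by simp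
  have hIoiT : ∫ x in Ioi T, ψ x = 0 := by
    have : ∀ x ∈ Ioi T, ψ x = 0 := by
      intro x hx
      rw [mem_Ioi] at hx
      have hhx : h x < 0 := by
        rw [hhdef]
        simp only
        apply div_neg_of_neg_of_pos _ hPy
        rw [hTdef] at hx
        rw [div_lt_iff₀ hPx] at hx
        nlinarith
      have : min (g x) (h x) ≤ 0 := le_of_lt (lt_of_le_of_lt (min_le_right _ _) hhx)
      rw [hψdef]
      simp only
      rw [hφdef]
      simp only
      rw [hFY0 _ this, mul_zero]
    rw [setIntegral_congr_fun measurableSet_Ioi this]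
    simp
  -- middle pieces
  have hmid1 : ∫ x in Ioc (0 : ℝ) Δ1, ψ x = ∫ x in (0 : ℝ)..Δ1, fX x * FY (γbar * (ε2 + ε3 * x) / Θ) := by
    rw [intervalIntegral.integral_of_le hΔ1nonneg]
    apply setIntegral_congr_fun measurableSet_Ioc
    intro x hx
    rw [hψdef]
    simp only
    rw [hφdef]
    simp only
    rw [min_eq_left ((hiff x).mp hx.2)]
  have hmid2 : ∫ x in Ioc Δ1 T, ψ x = ∫ x in Δ1..T, fX x * FY ((Pth - Px * x) / Py) := by
    rw [intervalIntegral.integral_of_le hΔT.le]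
    apply setIntegral_congr_fun measurableSet_Ioc
    intro x hx
    rw [hψdef]
    simp only
    rw [hφdef]
    simp only
    have : h x ≤ g x := by
      by_contra hcon
      push_neg at hcon
      have := (hiff x).mpr hcon.le
      exact absurd hx.1 (not_lt.mpr this)
    rw [min_eq_right this]
  -- assemble the splitting
  have hdisj1 : Disjoint (Ioc (0 : ℝ) Δ1) (Ioc Δ1 T) := by
    rw [Set.disjoint_left]
    rintro x ⟨_, hx2⟩ ⟨hx3, _⟩
    exact absurd hx3 (not_lt.mpr hx2)
  have hdisj2 : Disjoint (Ioc (0 : ℝ) T) (Ioi T) := by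
    rw [Set.disjoint_left]
    rintro x ⟨_, hx2⟩ hx3
    exact absurd hx3 (not_lt.mpr hx2)
  have hsplit : ∫ x, ψ x = (∫ x in Iio (0 : ℝ), ψ x) + ((∫ x in Ioc (0 : ℝ) Δ1, ψ x)
      + (∫ x in Ioc Δ1 T, ψ x) + ∫ x in Ioi T, ψ x) := by
    have h1 : ∫ x, ψ x = (∫ x in Iio (0 : ℝ), ψ x) + ∫ x in Ici (0 : ℝ), ψ x := by
      rw [← integral_add_compl measurableSet_Iio hψint, compl_Iio]
    rw [h1]
    congr 1
    rw [integral_Ici_eq_integral_Ioi]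
    rw [← Ioc_union_Ioi_eq_Ioi hT.le,
      setIntegral_union hdisj2 measurableSet_Ioi hψint.integrableOn hψint.integrableOn,
      ← Ioc_union_Ioc_eq_Ioc hΔ1nonneg hΔT.le,
      setIntegral_union hdisj1 measurableSet_Ioc hψint.integrableOn hψint.integrableOn]
  rw [hstep2, hkey]
  rw [show (∫ x, fX x * φ x) = ∫ x, ψ x from rfl, hsplit, hIio0, hIoiT, hmid1, hmid2]
  ring
end

section
/- Let X and Y be independent random variables, X Gamma-distributed with positive integer shape mX and rate mX/ΩX, Y Gamma-distributed with positive integer shape mY and rate mY/ΩY, where ΩX, ΩY > 0. Let ε1, ε2, ε3, ε4, γ̄, Px, Py, Pth be positive reals with Θ := ε1 − ε4·γ̄ > 0, let Δ1 := (Pth·Θ − γ̄·ε2·Py)/(γ̄·ε3·Py + Px·Θ) and assume Δ1 ≥ 0, and let Ξ := mY·Px/(ΩY·Py) − mX/ΩX with Ξ ≠ 0, Ψ := mX/ΩX + mY·γ̄·ε3/(ΩY·Θ). Then Pr[ ε1·Y/(ε2 + ε3·X + ε4·Y) < γ̄ and Px·X + Py·Y ≤ Pth ] = Υ[mX, mX·Pth/(ΩX·Px)]/Γ[mX]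 − ((mX/ΩX)^{mX}·e^{−mY·Pth/(ΩY·Py)}/Γ[mX]) · Σ_{k=0}^{mY−1} ((mY/(ΩY·Py))^k/k!) · Σ_{q=0}^{k} C(k,q)·Pth^q·(−Px)^{k−q} · Σ_{t=0}^{ν} ((−1)^t·t!·C(ν,t)/Ξ^{t+1}) · ( e^{Ξ·Pth/Px}·(Pth/Px)^{ν−t} − e^{Ξ·Δ1}·Δ1^{ν−t} ) − ((mX/ΩX)^{mX}/Γ[mX])·e^{−mY·γ̄·ε2/(ΩY·Θ)} · Σ_{p=0}^{mY−1} ((mY/(ΩY·Θ))^p/p!) · Σ_{n=0}^{p} C(p,n)·γ̄^p·ε2^n·ε3^{p−n} · Υ[mX + p − n, Ψ·Δ1] · Ψ^{−(mX+p−n)}, where ν := mX + k − q − 1 and C(·,·) denotes the binomial coefficient. -/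
open MeasureTheory Finset

/-- Lower incomplete gamma function `Υ[s, x] = ∫_0^x t^{s−1} e^{−t} dt`. -/
noncomputable def lowerIncGamma (s x : ℝ) : ℝ :=
  ∫ t in (0 : ℝ)..x, t ^ (s - 1) * Real.exp (-t)


lemma nat_fact_choose (ν t : ℕ) :
    (t+1).factorial * ν.choose (t+1) = t.factorial * ν.choose t * (ν - t) := by
  rw [Nat.factorial_succ, mul_assoc, mul_comm (t+1), mul_assoc, Nat.choose_succ_right_eq,
    mul_assoc]

lemma polyExp_sum_eq (ν : ℕ) (a : ℝ) (ha : a ≠ 0) (x : ℝ) :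
    a * (∑ t ∈ range (ν+1), ((-1:ℝ)^t * t.factorial * (ν.choose t) / a^(t+1)) * x^(ν-t))
      + ∑ t ∈ range (ν+1),
          ((-1:ℝ)^t * t.factorial * (ν.choose t) / a^(t+1)) * (((ν-t : ℕ) : ℝ) * x^(ν-t-1))
    = x^ν := by
  rw [Finset.mul_sum, ← Finset.sum_add_distrib]
  have key : ∀ t ∈ range (ν+1),
      a * (((-1:ℝ)^t * t.factorial * (ν.choose t) / a^(t+1)) * x^(ν-t))
        + ((-1:ℝ)^t * t.factorial * (ν.choose t) / a^(t+1)) * (((ν-t : ℕ) : ℝ) * x^(ν-t-1))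
      = (fun s => ((-1:ℝ)^s * s.factorial * (ν.choose s) / a^s) * x^(ν-s)) t
        - (fun s => ((-1:ℝ)^s * s.factorial * (ν.choose s) / a^s) * x^(ν-s)) (t+1) := by
    intro t _
    simp only
    have h1 : ((t+1).factorial : ℝ) * (ν.choose (t+1) : ℝ)
        = (t.factorial : ℝ) * (ν.choose t : ℝ) * ((ν - t : ℕ) : ℝ) := by
      rw [← Nat.cast_mul, ← Nat.cast_mul, ← Nat.cast_mul, nat_fact_choose]
    have h2 : ν - (t+1) = ν - t - 1 := by omega
    rw [h2, pow_succ (-1:ℝ) t]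
    have hat : (a:ℝ)^(t+1) ≠ 0 := pow_ne_zero _ ha
    field_simp
    linear_combination (-(a^t) * x^(ν-t-1)) * h1
  rw [Finset.sum_congr rfl key, Finset.sum_range_sub']
  simp [Nat.choose_succ_self]

lemma hasDerivAt_polyExp (ν : ℕ) (a : ℝ) (ha : a ≠ 0) (x : ℝ) :
    HasDerivAt (fun y => Real.exp (a*y) * ∑ t ∈ range (ν+1),
        ((-1:ℝ)^t * t.factorial * (ν.choose t) / a^(t+1)) * y^(ν-t))
      (x^ν * Real.exp (a*x)) x := by
  have hexp : HasDerivAt (fun y : ℝ => Real.exp (a*y)) (a * Real.exp (a*x)) x := by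
    simpa [mul_comm, Function.comp_def] using (Real.hasDerivAt_exp (a*x)).comp x ((hasDerivAt_id x).const_mul a)
  have hsum : HasDerivAt (fun y : ℝ => ∑ t ∈ range (ν+1),
      ((-1:ℝ)^t * t.factorial * (ν.choose t) / a^(t+1)) * y^(ν-t))
      (∑ t ∈ range (ν+1),
        ((-1:ℝ)^t * t.factorial * (ν.choose t) / a^(t+1)) * (((ν-t:ℕ):ℝ) * x^(ν-t-1))) x :=
    HasDerivAt.fun_sum fun t _ => (hasDerivAt_pow (ν-t) x).const_mul _
  have h := hexp.mul hsum
  refine h.congr_deriv (Eq.symm ?_)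
  have := polyExp_sum_eq ν a ha x
  nlinarith [this, Real.exp_pos (a*x)]

lemma integral_polyExp (ν : ℕ) (a : ℝ) (ha : a ≠ 0) (b c : ℝ) :
    ∫ x in b..c, x^ν * Real.exp (a*x)
      = ∑ t ∈ range (ν+1), ((-1:ℝ)^t * t.factorial * (ν.choose t) / a^(t+1)) *
          (Real.exp (a*c) * c^(ν-t) - Real.exp (a*b) * b^(ν-t)) := by
  rw [intervalIntegral.integral_eq_sub_of_hasDerivAt
      (f := fun y => Real.exp (a*y) * ∑ t ∈ range (ν+1),
        ((-1:ℝ)^t * t.factorial * (ν.choose t) / a^(t+1)) * y^(ν-t))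
      (fun x _ => hasDerivAt_polyExp ν a ha x)
      (((continuous_pow ν).mul ((continuous_const.mul continuous_id).rexp)).intervalIntegrable b c)]
  rw [Finset.mul_sum, Finset.mul_sum, ← Finset.sum_sub_distrib]
  exact Finset.sum_congr rfl fun t _ => by ring

lemma hasDerivAt_cdfSeries (n : ℕ) (hn : 0 < n) (r x : ℝ) :
    HasDerivAt (fun z => 1 - Real.exp (-(r*z)) * ∑ k ∈ range n, (r*z)^k / k.factorial)
      (r^n / (n-1).factorial * x^(n-1) * Real.exp (-(r*x))) x := by
  have hinner : HasDerivAt (fun z : ℝ => -(r*z)) (-r) x := by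
    exact (((hasDerivAt_id x).const_mul r).neg).congr_deriv (by simp)
  have hexp : HasDerivAt (fun z : ℝ => Real.exp (-(r*z))) (-r * Real.exp (-(r*x))) x := by
    have := (Real.hasDerivAt_exp (-(r*x))).comp x hinner
    simpa [Function.comp_def, mul_comm] using this
  have hmul : HasDerivAt (fun y : ℝ => r * y) r x := by
    simpa using (hasDerivAt_id x).const_mul r
  have hsum : HasDerivAt (fun z : ℝ => ∑ k ∈ range n, (r*z)^k / k.factorial)
      (∑ k ∈ range n, ((k:ℝ) * (r*x)^(k-1) * r) / k.factorial) x := by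
    refine HasDerivAt.fun_sum fun k _ => HasDerivAt.div_const ?_ _
    have := (hasDerivAt_pow k (r*x)).comp x hmul
    simpa [Function.comp_def] using this
  have h := (hexp.mul hsum).const_sub 1
  refine h.congr_deriv (Eq.symm ?_)
  have tele : ∑ k ∈ range n, ((r*x)^k / k.factorial - ((k:ℝ) * (r*x)^(k-1)) / k.factorial)
      = (n:ℝ) * (r*x)^(n-1) / n.factorial := by
    have hcongr : ∀ k ∈ range n, (r*x)^k / k.factorial - ((k:ℝ) * (r*x)^(k-1)) / k.factorial
        = ((k+1:ℕ):ℝ) * (r*x)^((k+1)-1) / (k+1).factorial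
          - ((k:ℕ):ℝ) * (r*x)^(k-1) / k.factorial := by
      intro k _
      have hfs : (((k+1).factorial :ℝ)) = ((k:ℝ)+1) * k.factorial := by
        rw [Nat.factorial_succ]; push_cast; ring
      have hk : ((k:ℝ)+1) * (k.factorial:ℝ) ≠ 0 := by positivity
      rw [hfs]
      push_cast
      field_simp
    rw [Finset.sum_congr rfl hcongr, Finset.sum_range_sub
        (fun k => ((k:ℕ):ℝ) * (r*x)^(k-1) / k.factorial)]
    simp
  have expand : ∑ k ∈ range n, ((k:ℝ) * (r*x)^(k-1) * r) / k.factorial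
      = r * ∑ k ∈ range n, ((k:ℝ) * (r*x)^(k-1)) / k.factorial := by
    rw [Finset.mul_sum]; exact Finset.sum_congr rfl fun k _ => by ring
  have t2 : (∑ k ∈ range n, (r*x)^k / k.factorial)
      - (∑ k ∈ range n, ((k:ℝ) * (r*x)^(k-1)) / k.factorial)
      = (n:ℝ) * (r*x)^(n-1) / n.factorial := by
    rw [← tele, Finset.sum_sub_distrib]
  have hfac : (n.factorial : ℝ) = (n:ℝ) * ((n-1).factorial : ℝ) := by
    cases n with
    | zero => omega
    | succ m => rw [Nat.factorial_succ]; push_cast; simp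
  have hne : ((n-1).factorial : ℝ) ≠ 0 := by positivity
  have hnn : (n:ℝ) ≠ 0 := by exact_mod_cast hn.ne'
  have hrr : r * r^(n-1) = r^n := by
    rw [← pow_succ']
    congr 1
    omega
  have hC : r * ((n:ℝ) * (r*x)^(n-1) / n.factorial) = r^n / (n-1).factorial * x^(n-1) := by
    rw [hfac, mul_pow]
    field_simp
    linear_combination (x^(n-1)) * hrr
  rw [expand]
  linear_combination (-(r*Real.exp (-(r*x)))) * t2 + (-(Real.exp (-(r*x)))) * hC

lemma integral_cdf (n : ℕ) (hn : 0 < n) (r : ℝ) (z : ℝ) :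
    ∫ y in (0:ℝ)..z, r^n / (n-1).factorial * y^(n-1:ℕ) * Real.exp (-(r*y))
      = 1 - Real.exp (-(r*z)) * ∑ k ∈ range n, (r*z)^k / k.factorial := by
  have hcont : Continuous fun y : ℝ => r^n / (n-1).factorial * y^(n-1:ℕ) * Real.exp (-(r*y)) :=
    (continuous_const.mul (continuous_pow _)).mul
      ((continuous_const.mul continuous_id).neg.rexp)
  rw [intervalIntegral.integral_eq_sub_of_hasDerivAt
      (fun x _ => hasDerivAt_cdfSeries n hn r x) (hcont.intervalIntegrable 0 z)]
  have h0 : ∑ k ∈ range n, ((r*(0:ℝ))^k / k.factorial) = 1 := by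
    rw [Finset.sum_eq_single 0]
    · simp
    · intro b _ hb; simp [mul_zero, zero_pow hb]
    · intro h; exact absurd (Finset.mem_range.mpr hn) h
  rw [h0]
  simp

lemma lowerIncGamma_nat (M : ℕ) (hM : 0 < M) (x : ℝ) :
    lowerIncGamma M x = ∫ t in (0:ℝ)..x, t^(M-1:ℕ) * Real.exp (-t) := by
  unfold lowerIncGamma
  rw [show ((M:ℝ)-1) = ((M-1:ℕ):ℝ) by rw [Nat.cast_sub hM]; simp]
  simp_rw [Real.rpow_natCast]

lemma integral_poly_exp_neg (ν : ℕ) (Ψ : ℝ) (hΨ : 0 < Ψ) (Δ : ℝ) :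
    ∫ x in (0:ℝ)..Δ, x^ν * Real.exp (-(Ψ*x))
      = (Ψ^(ν+1))⁻¹ * lowerIncGamma (ν+1 : ℕ) (Ψ*Δ) := by
  have key : (Ψ • ∫ x in (0:ℝ)..Δ, (fun t => t^ν * Real.exp (-t)) (Ψ * x))
      = ∫ t in (Ψ*0)..(Ψ*Δ), t^ν * Real.exp (-t) :=
    intervalIntegral.smul_integral_comp_mul_left (f := fun t => t ^ ν * Real.exp (-t)) (a := 0) (b := Δ) Ψ
  simp only [mul_zero, smul_eq_mul] at key
  rw [lowerIncGamma_nat (ν+1) ν.succ_pos, show (ν+1-1 : ℕ) = ν from rfl]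
  simp_rw [mul_pow, mul_assoc] at key
  rw [intervalIntegral.integral_const_mul] at key
  rw [← key]
  have : Ψ^(ν+1) ≠ 0 := pow_ne_zero _ hΨ.ne'
  field_simp
  ring

lemma cdfSeries_nonneg (n : ℕ) (r z : ℝ) (hw : 0 ≤ r * z) :
    0 ≤ 1 - Real.exp (-(r*z)) * ∑ k ∈ range n, (r*z)^k / k.factorial := by
  have h1 : ∑ k ∈ range n, (r*z)^k / k.factorial ≤ Real.exp (r*z) :=
    Real.sum_le_exp_of_nonneg hw n
  have h2 : Real.exp (-(r*z)) * ∑ k ∈ range n, (r*z)^k / k.factorial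
      ≤ Real.exp (-(r*z)) * Real.exp (r*z) :=
    mul_le_mul_of_nonneg_left h1 (Real.exp_pos _).le
  rw [← Real.exp_add, neg_add_cancel, Real.exp_zero] at h2
  linarith

lemma cdfSeries_le_one (n : ℕ) (r z : ℝ) (hw : 0 ≤ r * z) :
    1 - Real.exp (-(r*z)) * ∑ k ∈ range n, (r*z)^k / k.factorial ≤ 1 := by
  have : 0 ≤ Real.exp (-(r*z)) * ∑ k ∈ range n, (r*z)^k / k.factorial := by
    apply mul_nonneg (Real.exp_pos _).le
    exact Finset.sum_nonneg fun k _ => div_nonneg (pow_nonneg hw k) (Nat.cast_nonneg _)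
  linarith

open MeasureTheory
open ProbabilityTheory (gammaMeasure gammaPDF gammaPDFReal gammaPDF_of_nonneg lintegral_gammaPDF_of_nonpos measurable_gammaPDFReal gammaPDFReal_nonneg isProbabilityMeasure_gammaMeasure)

lemma Gamma_nat' (n : ℕ) (hn : 0 < n) : Real.Gamma n = ((n-1).factorial : ℝ) := by
  cases n with
  | zero => omega
  | succ m =>
    have : ((m+1 : ℕ) : ℝ) = (m : ℝ) + 1 := by push_cast; ring
    rw [this, Real.Gamma_nat_eq_factorial]
    simp

lemma gammaMeasure_Icc (n : ℕ) (hn : 0 < n) (r : ℝ) (hr : 0 < r) (z : ℝ) (hz : 0 ≤ z) :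
    gammaMeasure n r (Set.Icc 0 z)
      = ENNReal.ofReal (1 - Real.exp (-(r*z)) * ∑ k ∈ range n, (r*z)^k / k.factorial) := by
  rw [gammaMeasure, withDensity_apply _ measurableSet_Icc]
  have hpdf : ∀ y ∈ Set.Icc (0:ℝ) z, gammaPDF n r y
      = ENNReal.ofReal (r^n / (n-1).factorial * y^(n-1:ℕ) * Real.exp (-(r*y))) := by
    intro y hy
    rw [gammaPDF_of_nonneg hy.1]
    congr 2
    rw [Real.rpow_natCast, Gamma_nat' n hn]
    rw [show ((n:ℝ)-1) = ((n-1:ℕ):ℝ) by rw [Nat.cast_sub hn]; simp, Real.rpow_natCast]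
  rw [setLIntegral_congr_fun measurableSet_Icc hpdf]
  have hcont : Continuous fun y : ℝ => r^n / (n-1).factorial * y^(n-1:ℕ) * Real.exp (-(r*y)) :=
    (continuous_const.mul (continuous_pow _)).mul
      ((continuous_const.mul continuous_id).neg.rexp)
  have hnn : 0 ≤ᵐ[volume.restrict (Set.Icc (0:ℝ) z)]
      fun y : ℝ => r^n / (n-1).factorial * y^(n-1:ℕ) * Real.exp (-(r*y)) := by
    refine (ae_restrict_iff' measurableSet_Icc).mpr (MeasureTheory.ae_of_all _ fun y hy => ?_)
    have := hy.1
    positivity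
  rw [← ofReal_integral_eq_lintegral_ofReal (hcont.integrableOn_Icc) hnn]
  congr 1
  rw [MeasureTheory.integral_Icc_eq_integral_Ioc,
    ← intervalIntegral.integral_of_le hz, integral_cdf n hn r z]

lemma gammaMeasure_slice (n : ℕ) (hn : 0 < n) (r : ℝ) (hr : 0 < r) (z : ℝ) (hz : 0 ≤ z)
    (s : Set ℝ) (h1 : Set.Ioo 0 z ⊆ s) (h2 : s ⊆ Set.Icc 0 z) :
    gammaMeasure n r s
      = ENNReal.ofReal (1 - Real.exp (-(r*z)) * ∑ k ∈ range n, (r*z)^k / k.factorial) := by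
  rw [← gammaMeasure_Icc n hn r hr z hz]
  apply measure_congr
  rw [MeasureTheory.ae_eq_set]
  constructor
  · rw [Set.diff_eq_empty.mpr h2]; simp
  · apply measure_mono_null (t := ({0, z} : Set ℝ))
    · intro y hy
      rcases hy with ⟨hy1, hy2⟩
      by_contra hne
      simp only [Set.mem_insert_iff, Set.mem_singleton_iff] at hne
      push_neg at hne
      exact hy2 (h1 ⟨lt_of_le_of_ne hy1.1 (Ne.symm hne.1), lt_of_le_of_ne hy1.2 hne.2⟩)
    · refine (withDensity_absolutelyContinuous volume _) ?_
      exact Set.Finite.measure_zero (by simp : ({0, z} : Set ℝ).Finite) _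

lemma gammaMeasure_Iio_zero (a r : ℝ) : gammaMeasure a r (Set.Iio 0) = 0 := by
  rw [gammaMeasure, withDensity_apply _ measurableSet_Iio]
  exact lintegral_gammaPDF_of_nonpos le_rfl

lemma tailL_integral (mX mY : ℕ) (hmX1 : 0 < mX) (lX lY Px Py Pth Δ1 Ξ : ℝ)
    (hPy : Py ≠ 0) (hΞdef : Ξ = lY * Px / Py - lX) (hΞne : Ξ ≠ 0) :
    ∫ x in Δ1..(Pth/Px), (lX^mX / (mX-1).factorial * x^(mX-1:ℕ) * Real.exp (-(lX*x)))
        * (Real.exp (-(lY * ((Pth - Px*x)/Py))) *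
            ∑ k ∈ range mY, (lY * ((Pth - Px*x)/Py))^k / k.factorial)
      = (lX^mX * Real.exp (-(lY * Pth / Py)) / (mX-1).factorial) *
          ∑ k ∈ range mY, ((lY / Py)^k / (k.factorial:ℝ)) *
            ∑ q ∈ range (k+1), (k.choose q : ℝ) * Pth^q * (-Px)^(k-q) *
              ∑ t ∈ range (mX + k - q - 1 + 1),
                ((-1:ℝ)^t * (t.factorial:ℝ) * ((mX+k-q-1).choose t : ℝ) / Ξ^(t+1)) *
                  (Real.exp (Ξ * Pth / Px) * (Pth/Px)^(mX+k-q-1-t)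
                    - Real.exp (Ξ * Δ1) * Δ1^(mX+k-q-1-t)) := by
  have hptwise : ∀ x : ℝ,
      (lX^mX / (mX-1).factorial * x^(mX-1:ℕ) * Real.exp (-(lX*x)))
        * (Real.exp (-(lY * ((Pth - Px*x)/Py))) *
            ∑ k ∈ range mY, (lY * ((Pth - Px*x)/Py))^k / k.factorial)
      = ∑ k ∈ range mY, ∑ q ∈ range (k+1),
          ((lX^mX * Real.exp (-(lY * Pth / Py)) / (mX-1).factorial)
            * ((lY / Py)^k / (k.factorial:ℝ))
            * ((k.choose q : ℝ) * Pth^q * (-Px)^(k-q)))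
          * (x^(mX+k-q-1:ℕ) * Real.exp (Ξ*x)) := by
    intro x
    have hexp : Real.exp (-(lX*x)) * Real.exp (-(lY * ((Pth - Px*x)/Py)))
        = Real.exp (-(lY * Pth / Py)) * Real.exp (Ξ*x) := by
      rw [← Real.exp_add, ← Real.exp_add]
      congr 1
      rw [hΞdef]
      field_simp
      ring
    have hpow : ∀ k : ℕ, (lY * ((Pth - Px*x)/Py))^k = (lY/Py)^k * (Pth - Px*x)^k := by
      intro k
      rw [← mul_pow]
      congr 1
      field_simp
    simp only [Finset.mul_sum]
    refine Finset.sum_congr rfl fun k hk => ?_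
    have hbin : (Pth - Px*x)^k
        = ∑ q ∈ range (k+1), Pth^q * ((-Px)*x)^(k-q) * (k.choose q : ℝ) := by
      rw [show Pth - Px*x = Pth + (-Px)*x by ring, add_pow]
    rw [hpow k, hbin]
    simp only [Finset.mul_sum, Finset.sum_mul, Finset.sum_div]
    refine Finset.sum_congr rfl fun q hq => ?_
    have hq' : q ≤ k := by
      have := Finset.mem_range.mp hq; omega
    have hν : (mX-1) + (k-q) = mX+k-q-1 := by omega
    rw [mul_pow (-Px) x, ← hν, pow_add]
    linear_combination (lX^mX / ((mX-1).factorial:ℝ) * x^(mX-1:ℕ) * ((lY/Py)^k * Pth^q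
      * (-Px)^(k-q) * x^(k-q) * (k.choose q:ℝ) / (k.factorial:ℝ))) * hexp
  rw [intervalIntegral.integral_congr (fun x _ => hptwise x)]
  have hcont1 : ∀ (c : ℝ) (ν : ℕ), Continuous fun x : ℝ => c * (x^ν * Real.exp (Ξ*x)) :=
    fun c ν => continuous_const.mul ((continuous_pow ν).mul
      ((continuous_const.mul continuous_id).rexp))
  rw [intervalIntegral.integral_finset_sum
      (fun k _ => ((continuous_finset_sum _ fun q _ => hcont1 _ _).intervalIntegrable _ _))]
  rw [Finset.mul_sum]
  refine Finset.sum_congr rfl fun k hk => ?_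
  rw [intervalIntegral.integral_finset_sum (fun q _ => (hcont1 _ _).intervalIntegrable _ _)]
  simp only [Finset.mul_sum]
  refine Finset.sum_congr rfl fun q hq => ?_
  rw [intervalIntegral.integral_const_mul, integral_polyExp (mX+k-q-1) Ξ hΞne Δ1 (Pth/Px)]
  rw [show Ξ * (Pth/Px) = Ξ*Pth/Px from (mul_div_assoc _ _ _).symm, Finset.mul_sum]
  refine Finset.sum_congr rfl fun t _ => ?_
  ring

lemma tailG_integral (mX mY : ℕ) (hmX1 : 0 < mX) (lX lY γbar ε2 ε3 Θ Δ1 Ψ : ℝ)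
    (hΘ : Θ ≠ 0) (hΨdef : Ψ = lX + lY * γbar * ε3 / Θ) (hΨpos : 0 < Ψ) :
    ∫ x in (0:ℝ)..Δ1, (lX^mX / (mX-1).factorial * x^(mX-1:ℕ) * Real.exp (-(lX*x)))
        * (Real.exp (-(lY * (γbar * (ε2 + ε3*x) / Θ))) *
            ∑ p ∈ range mY, (lY * (γbar * (ε2 + ε3*x) / Θ))^p / p.factorial)
      = (lX^mX / (mX-1).factorial) * Real.exp (-(lY * γbar * ε2 / Θ)) *
          ∑ p ∈ range mY, ((lY / Θ)^p / (p.factorial:ℝ)) *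
            ∑ n ∈ range (p+1), (p.choose n : ℝ) * γbar^p * ε2^n * ε3^(p-n)
              * lowerIncGamma ((mX:ℝ)+p-n) (Ψ*Δ1) * (Ψ^(mX+p-n))⁻¹ := by
  have hptwise : ∀ x : ℝ,
      (lX^mX / (mX-1).factorial * x^(mX-1:ℕ) * Real.exp (-(lX*x)))
        * (Real.exp (-(lY * (γbar * (ε2 + ε3*x) / Θ))) *
            ∑ p ∈ range mY, (lY * (γbar * (ε2 + ε3*x) / Θ))^p / p.factorial)
      = ∑ p ∈ range mY, ∑ n ∈ range (p+1),
          ((lX^mX / (mX-1).factorial) * Real.exp (-(lY * γbar * ε2 / Θ))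
            * ((lY * γbar / Θ)^p / (p.factorial:ℝ))
            * ((p.choose n : ℝ) * ε2^n * ε3^(p-n)))
          * (x^(mX-1+(p-n):ℕ) * Real.exp (-(Ψ*x))) := by
    intro x
    have hexp : Real.exp (-(lX*x)) * Real.exp (-(lY * (γbar * (ε2 + ε3*x) / Θ)))
        = Real.exp (-(lY * γbar * ε2 / Θ)) * Real.exp (-(Ψ*x)) := by
      rw [← Real.exp_add, ← Real.exp_add]
      congr 1
      rw [hΨdef]
      field_simp
      ring
    have hpow : ∀ p : ℕ, (lY * (γbar * (ε2 + ε3*x) / Θ))^p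
        = (lY * γbar / Θ)^p * (ε2 + ε3*x)^p := by
      intro p
      rw [← mul_pow]
      congr 1
      field_simp
    simp only [Finset.mul_sum]
    refine Finset.sum_congr rfl fun p hp => ?_
    have hbin : (ε2 + ε3*x)^p
        = ∑ n ∈ range (p+1), ε2^n * (ε3*x)^(p-n) * (p.choose n : ℝ) := add_pow _ _ _
    rw [hpow p, hbin]
    simp only [Finset.mul_sum, Finset.sum_mul, Finset.sum_div]
    refine Finset.sum_congr rfl fun n hn => ?_
    rw [mul_pow ε3 x, pow_add]
    linear_combination (lX^mX / ((mX-1).factorial:ℝ) * x^(mX-1:ℕ) * ((lY*γbar/Θ)^p * ε2^n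
      * ε3^(p-n) * x^(p-n) * (p.choose n:ℝ) / (p.factorial:ℝ))) * hexp
  rw [intervalIntegral.integral_congr (fun x _ => hptwise x)]
  have hcont1 : ∀ (c : ℝ) (ν : ℕ), Continuous fun x : ℝ => c * (x^ν * Real.exp (-(Ψ*x))) :=
    fun c ν => continuous_const.mul ((continuous_pow ν).mul
      ((continuous_const.mul continuous_id).neg.rexp))
  rw [intervalIntegral.integral_finset_sum
      (fun p _ => ((continuous_finset_sum _ fun n _ => hcont1 _ _).intervalIntegrable _ _))]
  rw [Finset.mul_sum]
  refine Finset.sum_congr rfl fun p hp => ?_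
  rw [intervalIntegral.integral_finset_sum (fun n _ => (hcont1 _ _).intervalIntegrable _ _)]
  simp only [Finset.mul_sum]
  refine Finset.sum_congr rfl fun n hn => ?_
  have hn' : n ≤ p := by have := Finset.mem_range.mp hn; omega
  rw [intervalIntegral.integral_const_mul, integral_poly_exp_neg (mX-1+(p-n)) Ψ hΨpos Δ1]
  rw [show (mX-1+(p-n))+1 = mX+p-n by omega]
  rw [show ((mX+p-n : ℕ):ℝ) = (mX:ℝ)+p-n by
    rw [Nat.cast_sub (by omega : n ≤ mX+p), Nat.cast_add]]
  ring

set_option maxHeartbeats 4000000 in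
/-- Lemma 1 of the paper: closed-form CDF of the linear-regime relay SNR
`γ^(lin) = ε1·Y/(ε2 + ε3·X + ε4·Y)` jointly with the non-saturation event
`Px·X + Py·Y ≤ Pth` of the nonlinear energy harvester, where `X` and `Y` are
independent Gamma random variables (Nakagami-m fading with integer shapes). -/
theorem stmt_4 {Ω : Type*} [MeasurableSpace Ω]
    (ℙ : Measure Ω) [IsProbabilityMeasure ℙ]
    (X Y : Ω → ℝ) (hmX : Measurable X) (hmY : Measurable Y)
    (hindep : ProbabilityTheory.IndepFun X Y ℙ)
    (mX mY : ℕ) (hmX1 : 0 < mX) (hmY1 : 0 < mY)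
    (ΩX ΩY : ℝ) (hΩX : 0 < ΩX) (hΩY : 0 < ΩY)
    (hXgamma : Measure.map X ℙ = ProbabilityTheory.gammaMeasure mX (mX / ΩX))
    (hYgamma : Measure.map Y ℙ = ProbabilityTheory.gammaMeasure mY (mY / ΩY))
    (ε1 ε2 ε3 ε4 γbar Px Py Pth : ℝ)
    (hε1 : 0 < ε1) (hε2 : 0 < ε2) (hε3 : 0 < ε3) (hε4 : 0 < ε4)
    (hγ : 0 < γbar) (hPx : 0 < Px) (hPy : 0 < Py) (hPth : 0 < Pth)
    (Θ : ℝ) (hΘdef : Θ = ε1 - ε4 * γbar) (hΘ : 0 < Θ)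
    (Δ1 : ℝ) (hΔ1 : Δ1 = (Pth * Θ - γbar * ε2 * Py) / (γbar * ε3 * Py + Px * Θ))
    (hΔ1nonneg : 0 ≤ Δ1)
    (Ξ : ℝ) (hΞ : Ξ = mY * Px / (ΩY * Py) - mX / ΩX) (hΞne : Ξ ≠ 0)
    (Ψ : ℝ) (hΨ : Ψ = mX / ΩX + mY * γbar * ε3 / (ΩY * Θ)) :
    (ℙ {ω | ε1 * Y ω / (ε2 + ε3 * X ω + ε4 * Y ω) < γbar ∧
            Px * X ω + Py * Y ω ≤ Pth}).toReal =
      lowerIncGamma mX (mX * Pth / (ΩX * Px)) / Real.Gamma mX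
      - ((mX / ΩX : ℝ) ^ mX * Real.exp (-(mY * Pth / (ΩY * Py))) / Real.Gamma mX) *
          ∑ k ∈ range mY, ((mY / (ΩY * Py) : ℝ) ^ k / (Nat.factorial k : ℝ)) *
            ∑ q ∈ range (k + 1), (Nat.choose k q : ℝ) * Pth ^ q * (-Px) ^ (k - q) *
              ∑ t ∈ range (mX + k - q - 1 + 1),
                ((-1 : ℝ) ^ t * (Nat.factorial t : ℝ) *
                    (Nat.choose (mX + k - q - 1) t : ℝ) / Ξ ^ (t + 1)) *
                  (Real.exp (Ξ * Pth / Px) * (Pth / Px) ^ (mX + k - q - 1 - t)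
                    - Real.exp (Ξ * Δ1) * Δ1 ^ (mX + k - q - 1 - t))
      - ((mX / ΩX : ℝ) ^ mX / Real.Gamma mX) * Real.exp (-(mY * γbar * ε2 / (ΩY * Θ))) *
          ∑ p ∈ range mY, ((mY / (ΩY * Θ) : ℝ) ^ p / (Nat.factorial p : ℝ)) *
            ∑ n ∈ range (p + 1), (Nat.choose p n : ℝ) * γbar ^ p * ε2 ^ n * ε3 ^ (p - n) *
              lowerIncGamma ((mX : ℝ) + p - n) (Ψ * Δ1) * (Ψ ^ (mX + p - n))⁻¹ := by
  -- abbreviations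
  have hmXR : (0:ℝ) < mX := by exact_mod_cast hmX1
  have hmYR : (0:ℝ) < mY := by exact_mod_cast hmY1
  set lX : ℝ := (mX : ℝ) / ΩX with hlXdef
  set lY : ℝ := (mY : ℝ) / ΩY with hlYdef
  have hlX : 0 < lX := div_pos hmXR hΩX
  have hlY : 0 < lY := div_pos hmYR hΩY
  set μX := ProbabilityTheory.gammaMeasure (mX:ℝ) lX with hμX
  set μY := ProbabilityTheory.gammaMeasure (mY:ℝ) lY with hμY
  have instX : IsProbabilityMeasure μX := isProbabilityMeasure_gammaMeasure hmXR hlX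
  have instY : IsProbabilityMeasure μY := isProbabilityMeasure_gammaMeasure hmYR hlY
  set gfun : ℝ → ℝ := fun x => γbar * (ε2 + ε3*x) / Θ with hgfun
  set Lfun : ℝ → ℝ := fun x => (Pth - Px*x) / Py with hLfun
  set FcY : ℝ → ℝ := fun z => 1 - Real.exp (-(lY*z)) * ∑ k ∈ range mY, (lY*z)^k / k.factorial
    with hFcY
  set F : ℝ → ℝ := fun x => if 0 ≤ x ∧ Px*x ≤ Pth then FcY (min (gfun x) (Lfun x)) else 0
    with hF
  set S : Set (ℝ×ℝ) := {p | ε1 * p.2 / (ε2 + ε3 * p.1 + ε4 * p.2) < γbar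
      ∧ Px * p.1 + Py * p.2 ≤ Pth} with hSdef
  set T : Set (ℝ×ℝ) := {p | 0 ≤ p.1 ∧ (0 ≤ p.2 ∧ p.2 < gfun p.1 ∧ Py * p.2 ≤ Pth - Px*p.1)}
    with hTdef
  -- continuity
  have hFcYcont : Continuous FcY := by
    rw [hFcY]
    refine continuous_const.sub (Continuous.mul ?_ ?_)
    · exact ((continuous_const.mul continuous_id).neg).rexp
    · exact continuous_finset_sum _ fun k _ =>
        ((continuous_const.mul continuous_id).pow k).div_const _
  have hgcont : Continuous gfun := by
    rw [hgfun]
    exact (continuous_const.mul (continuous_const.add (continuous_const.mul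
      continuous_id))).div_const _
  have hLcont : Continuous Lfun := by
    rw [hLfun]
    exact (continuous_const.sub (continuous_const.mul continuous_id)).div_const _
  have hSmeas : MeasurableSet S := by
    refine MeasurableSet.inter ?_ ?_
    · exact measurableSet_lt (Measurable.div ((measurable_const.mul measurable_snd))
        (((measurable_const.add (measurable_const.mul measurable_fst)).add
          (measurable_const.mul measurable_snd)))) measurable_const
    · exact measurableSet_le ((measurable_const.mul measurable_fst).add
        (measurable_const.mul measurable_snd)) measurable_const
  have hTmeas : MeasurableSet T := by
    refine MeasurableSet.inter (measurableSet_le measurable_const measurable_fst) ?_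
    refine MeasurableSet.inter (measurableSet_le measurable_const measurable_snd) ?_
    refine MeasurableSet.inter (measurableSet_lt measurable_snd
      (hgcont.measurable.comp measurable_fst)) ?_
    exact measurableSet_le (measurable_const.mul measurable_snd)
      (measurable_const.sub (measurable_const.mul measurable_fst))
  -- Step 1: express probability via product measure
  have hPT : ℙ {ω | ε1 * Y ω / (ε2 + ε3 * X ω + ε4 * Y ω) < γbar
      ∧ Px * X ω + Py * Y ω ≤ Pth} = (μX.prod μY) S := by
    have hpre : {ω | ε1 * Y ω / (ε2 + ε3 * X ω + ε4 * Y ω) < γbar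
        ∧ Px * X ω + Py * Y ω ≤ Pth} = (fun ω => (X ω, Y ω)) ⁻¹' S := by
      rw [hSdef]; rfl
    rw [hpre, ← Measure.map_apply (hmX.prodMk hmY) hSmeas,
      (ProbabilityTheory.indepFun_iff_map_prod_eq_prod_map_map hmX.aemeasurable
        hmY.aemeasurable).mp hindep, hXgamma, hYgamma]
  -- Step 2: reduce to T
  have hST : (μX.prod μY) S = (μX.prod μY) T := by
    have hBox : MeasurableSet ((Set.Ici (0:ℝ)) ×ˢ (Set.Ici (0:ℝ))) :=
      measurableSet_Ici.prod measurableSet_Ici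
    have hint : S ∩ (Set.Ici 0 ×ˢ Set.Ici 0) = T := by
      ext p
      simp only [hSdef, hTdef, Set.mem_inter_iff, Set.mem_setOf_eq, Set.mem_prod, Set.mem_Ici,
        hgfun]
      constructor
      · rintro ⟨⟨hlt, hle⟩, hx, hy⟩
        have hD : 0 < ε2 + ε3*p.1 + ε4*p.2 := by
          nlinarith [mul_nonneg hε3.le hx, mul_nonneg hε4.le hy]
        rw [div_lt_iff₀ hD] at hlt
        refine ⟨hx, hy, ?_, by linarith⟩
        rw [lt_div_iff₀ hΘ, hΘdef]
        ring_nf at hlt ⊢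
        linarith
      · rintro ⟨hx, hy, hg, hP⟩
        have hD : 0 < ε2 + ε3*p.1 + ε4*p.2 := by
          nlinarith [mul_nonneg hε3.le hx, mul_nonneg hε4.le hy]
        rw [lt_div_iff₀ hΘ, hΘdef] at hg
        refine ⟨⟨?_, by linarith⟩, hx, hy⟩
        rw [div_lt_iff₀ hD]
        ring_nf at hg ⊢
        linarith
    have hcompl : (μX.prod μY) ((Set.Ici (0:ℝ) ×ˢ Set.Ici (0:ℝ))ᶜ) = 0 := by
      have hsub : (Set.Ici (0:ℝ) ×ˢ Set.Ici (0:ℝ))ᶜ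
          ⊆ (Set.Iio (0:ℝ) ×ˢ (Set.univ : Set ℝ)) ∪ ((Set.univ : Set ℝ) ×ˢ Set.Iio (0:ℝ)) := by
        intro p hp
        simp only [Set.mem_compl_iff, Set.mem_prod, Set.mem_Ici, not_and_or, not_le] at hp
        simp only [Set.mem_union, Set.mem_prod, Set.mem_Iio, Set.mem_univ, true_and, and_true]
        tauto
      refine measure_mono_null hsub (measure_union_null ?_ ?_)
      · rw [Measure.prod_prod, hμX, gammaMeasure_Iio_zero, zero_mul]
      · rw [Measure.prod_prod, hμY, gammaMeasure_Iio_zero, mul_zero]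
    have hkey := measure_inter_add_diff (μ := μX.prod μY) S hBox
    rw [hint] at hkey
    have hdiff : (μX.prod μY) (S \ (Set.Ici 0 ×ˢ Set.Ici 0)) = 0 :=
      measure_mono_null (fun p hp => hp.2) hcompl
    rw [hdiff, add_zero] at hkey
    exact hkey.symm
  -- Step 3: slices
  have hgpos : ∀ x, 0 ≤ x → 0 < gfun x := by
    intro x hx
    simp only [hgfun]
    have h0 : 0 < ε2 + ε3*x := by nlinarith [mul_nonneg hε3.le hx]
    exact div_pos (by nlinarith) hΘ
  have hsliceEq : ∀ x : ℝ, μY (Prod.mk x ⁻¹' T) = ENNReal.ofReal (F x) := by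
    intro x
    by_cases hx : 0 ≤ x ∧ Px*x ≤ Pth
    · have hLval : Py * Lfun x = Pth - Px*x := by
        simp only [hLfun]
        field_simp
      have hLnn : 0 ≤ Lfun x := by
        simp only [hLfun]
        exact div_nonneg (by linarith [hx.2]) hPy.le
      have hz : 0 ≤ min (gfun x) (Lfun x) := le_min (hgpos x hx.1).le hLnn
      have hsub1 : Set.Ioo 0 (min (gfun x) (Lfun x)) ⊆ Prod.mk x ⁻¹' T := by
        intro y hy
        simp only [hTdef, Set.mem_preimage, Set.mem_setOf_eq]
        refine ⟨hx.1, hy.1.le, lt_of_lt_of_le hy.2 (min_le_left _ _), ?_⟩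
        have hyL : y ≤ Lfun x := (lt_of_lt_of_le hy.2 (min_le_right _ _)).le
        have h := mul_le_mul_of_nonneg_left hyL hPy.le
        rw [hLval] at h
        exact h
      have hsub2 : Prod.mk x ⁻¹' T ⊆ Set.Icc 0 (min (gfun x) (Lfun x)) := by
        intro y hy
        simp only [hTdef, Set.mem_preimage, Set.mem_setOf_eq] at hy
        refine ⟨hy.2.1, le_min hy.2.2.1.le ?_⟩
        simp only [hLfun]
        rw [le_div_iff₀ hPy]
        linarith [hy.2.2.2]
      rw [hμY, gammaMeasure_slice mY hmY1 lY hlY _ hz _ hsub1 hsub2]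
      simp only [hF, if_pos hx, hFcY]
    · rw [show Prod.mk x ⁻¹' T = (∅ : Set ℝ) from ?_]
      · simp only [hF, if_neg hx, measure_empty, ENNReal.ofReal_zero]
      · ext y
        simp only [hTdef, Set.mem_preimage, Set.mem_setOf_eq, Set.mem_empty_iff_false,
          iff_false]
        push_neg at hx
        rintro ⟨hx0, hy0, hyg, hyP⟩
        have h1 := hx hx0
        nlinarith [mul_nonneg hPy.le hy0]
  -- Step 4: with density
  have h2 : (μX.prod μY) T
      = ∫⁻ x, ENNReal.ofReal (gammaPDFReal (mX:ℝ) lX x * F x) := by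
    rw [Measure.prod_apply hTmeas]
    have hpdfmeas : Measurable (ProbabilityTheory.gammaPDF (mX:ℝ) lX) :=
      (measurable_gammaPDFReal _ _).ennreal_ofReal
    rw [hμX, ProbabilityTheory.gammaMeasure,
      lintegral_withDensity_eq_lintegral_mul volume hpdfmeas
        (measurable_measure_prodMk_left hTmeas)]
    refine lintegral_congr fun x => ?_
    simp only [Pi.mul_apply]
    rw [hsliceEq x, show ProbabilityTheory.gammaPDF (↑mX) lX x
        = ENNReal.ofReal (gammaPDFReal (↑mX) lX x) from rfl,
      ← ENNReal.ofReal_mul (gammaPDFReal_nonneg hmXR hlX x)]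
  -- nonnegativity of F
  have hFcYnn : ∀ z, 0 ≤ z → 0 ≤ FcY z := by
    intro z hz
    exact cdfSeries_nonneg mY lY z (mul_nonneg hlY.le hz)
  have hFnn : ∀ x, 0 ≤ F x := by
    intro x
    rw [hF]
    simp only
    split_ifs with h
    · refine hFcYnn _ (le_min (hgpos x h.1).le ?_)
      simp only [hLfun]
      exact div_nonneg (by linarith [h.2]) hPy.le
    · exact le_refl 0
  have hFmeas : Measurable F := by
    rw [hF]
    refine Measurable.ite ?_ ((hFcYcont.comp (hgcont.min hLcont)).measurable) measurable_const
    exact (measurableSet_le measurable_const measurable_id).inter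
      (measurableSet_le (measurable_const.mul measurable_id) measurable_const)
  -- Step 5: to Bochner integral
  have h3 : (∫⁻ x, ENNReal.ofReal (gammaPDFReal (mX:ℝ) lX x * F x)).toReal
      = ∫ x, gammaPDFReal (mX:ℝ) lX x * F x := by
    rw [integral_eq_lintegral_of_nonneg_ae
      (MeasureTheory.ae_of_all _ fun x => mul_nonneg (gammaPDFReal_nonneg hmXR hlX x) (hFnn x))
      (((measurable_gammaPDFReal _ _).mul hFmeas).aestronglyMeasurable)]
  have hT0 : (0:ℝ) ≤ Pth/Px := by positivity
  -- Step 6: restrict to [0, Pth/Px]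
  have h4 : ∫ x, gammaPDFReal (mX:ℝ) lX x * F x
      = ∫ x in (0:ℝ)..(Pth/Px), gammaPDFReal (mX:ℝ) lX x * F x := by
    have hvanish : ∀ x ∉ Set.Icc (0:ℝ) (Pth/Px), gammaPDFReal (mX:ℝ) lX x * F x = 0 := by
      intro x hx
      simp only [Set.mem_Icc, not_and_or, not_le] at hx
      rcases hx with h | h
      · rw [show gammaPDFReal (mX:ℝ) lX x = 0 from by
          simp [ProbabilityTheory.gammaPDFReal, not_le.mpr h], zero_mul]
      · rw [hF]
        simp only
        rw [if_neg, mul_zero]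
        rintro ⟨hx0, hxP⟩
        rw [div_lt_iff₀ hPx] at h
        linarith
    rw [← setIntegral_eq_integral_of_forall_compl_eq_zero hvanish,
      MeasureTheory.integral_Icc_eq_integral_Ioc, ← intervalIntegral.integral_of_le hT0]
  -- Step 7: continuous representative
  set pc : ℝ → ℝ := fun x => lX^mX / (mX-1).factorial * x^(mX-1:ℕ) * Real.exp (-(lX*x))
    with hpc
  have h5 : ∫ x in (0:ℝ)..(Pth/Px), gammaPDFReal (mX:ℝ) lX x * F x
      = ∫ x in (0:ℝ)..(Pth/Px), pc x * FcY (min (gfun x) (Lfun x)) := by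
    refine intervalIntegral.integral_congr fun x hx => ?_
    rw [Set.uIcc_of_le hT0] at hx
    have hx2 : Px * x ≤ Pth := by
      rw [← le_div_iff₀' hPx]
      exact hx.2
    have hxc : 0 ≤ x ∧ Px*x ≤ Pth := ⟨hx.1, hx2⟩
    rw [hF]
    simp only [if_pos hxc]
    congr 1
    simp only [ProbabilityTheory.gammaPDFReal, if_pos hx.1, hpc]
    rw [Real.rpow_natCast, Gamma_nat' mX hmX1,
      show ((mX:ℝ)-1) = ((mX-1:ℕ):ℝ) by rw [Nat.cast_sub hmX1]; simp, Real.rpow_natCast]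
  -- algebra facts
  have hDpos : 0 < γbar * ε3 * Py + Px * Θ := by positivity
  have hΔ1T0 : Δ1 ≤ Pth/Px := by
    rw [hΔ1, div_le_div_iff₀ hDpos hPx]
    nlinarith [mul_pos (mul_pos hγ hε2) (mul_pos hPy hPx), mul_pos (mul_pos hPth hγ)
      (mul_pos hε3 hPy)]
  have hgL : ∀ x, x ≤ Δ1 → gfun x ≤ Lfun x := by
    intro x hx
    rw [hΔ1, le_div_iff₀ hDpos] at hx
    simp only [hgfun, hLfun]
    rw [div_le_div_iff₀ hΘ hPy]
    ring_nf at hx ⊢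
    linarith
  have hLg : ∀ x, Δ1 ≤ x → Lfun x ≤ gfun x := by
    intro x hx
    rw [hΔ1, div_le_iff₀ hDpos] at hx
    simp only [hgfun, hLfun]
    rw [div_le_div_iff₀ hPy hΘ]
    ring_nf at hx ⊢
    linarith
  have hpccont : Continuous pc := by
    rw [hpc]
    exact (continuous_const.mul (continuous_pow _)).mul
      ((continuous_const.mul continuous_id).neg.rexp)
  -- Step 8: split at Δ1
  have h6 : ∫ x in (0:ℝ)..(Pth/Px), pc x * FcY (min (gfun x) (Lfun x))
      = (∫ x in (0:ℝ)..Δ1, pc x * FcY (gfun x))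
        + ∫ x in Δ1..(Pth/Px), pc x * FcY (Lfun x) := by
    have hIcont : Continuous fun x => pc x * FcY (min (gfun x) (Lfun x)) :=
      hpccont.mul (hFcYcont.comp (hgcont.min hLcont))
    rw [← intervalIntegral.integral_add_adjacent_intervals (b := Δ1)
      (hIcont.intervalIntegrable _ _) (hIcont.intervalIntegrable _ _)]
    congr 1
    · refine intervalIntegral.integral_congr fun x hx => ?_
      rw [Set.uIcc_of_le hΔ1nonneg] at hx
      rw [min_eq_left (hgL x hx.2)]
    · refine intervalIntegral.integral_congr fun x hx => ?_
      rw [Set.uIcc_of_le hΔ1T0] at hx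
      rw [min_eq_right (hLg x hx.1)]
  -- Step 9: expand FcY
  have h7 : ∫ x in (0:ℝ)..Δ1, pc x * FcY (gfun x)
      = (∫ x in (0:ℝ)..Δ1, pc x)
        - ∫ x in (0:ℝ)..Δ1, pc x * (Real.exp (-(lY * gfun x)) *
            ∑ p ∈ range mY, (lY * gfun x)^p / p.factorial) := by
    have hTailGcont : Continuous fun x => pc x * (Real.exp (-(lY * gfun x)) *
        ∑ p ∈ range mY, (lY * gfun x)^p / p.factorial) :=
      hpccont.mul ((((continuous_const.mul hgcont).neg).rexp).mul
        (continuous_finset_sum _ fun p _ => ((continuous_const.mul hgcont).pow p).div_const _))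
    rw [← intervalIntegral.integral_sub (hpccont.intervalIntegrable _ _)
      (hTailGcont.intervalIntegrable _ _)]
    refine intervalIntegral.integral_congr fun x _ => ?_
    simp only [hFcY]
    ring
  have h8 : ∫ x in Δ1..(Pth/Px), pc x * FcY (Lfun x)
      = (∫ x in Δ1..(Pth/Px), pc x)
        - ∫ x in Δ1..(Pth/Px), pc x * (Real.exp (-(lY * Lfun x)) *
            ∑ k ∈ range mY, (lY * Lfun x)^k / k.factorial) := by
    have hTailLcont : Continuous fun x => pc x * (Real.exp (-(lY * Lfun x)) *
        ∑ k ∈ range mY, (lY * Lfun x)^k / k.factorial) :=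
      hpccont.mul ((((continuous_const.mul hLcont).neg).rexp).mul
        (continuous_finset_sum _ fun k _ => ((continuous_const.mul hLcont).pow k).div_const _))
    rw [← intervalIntegral.integral_sub (hpccont.intervalIntegrable _ _)
      (hTailLcont.intervalIntegrable _ _)]
    refine intervalIntegral.integral_congr fun x _ => ?_
    simp only [hFcY]
    ring
  have h9 : (∫ x in (0:ℝ)..Δ1, pc x) + (∫ x in Δ1..(Pth/Px), pc x)
      = lowerIncGamma mX ((mX:ℝ) * Pth / (ΩX*Px)) / (mX-1).factorial := by
    rw [intervalIntegral.integral_add_adjacent_intervals (hpccont.intervalIntegrable _ _)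
      (hpccont.intervalIntegrable _ _)]
    simp only [hpc]
    simp_rw [mul_assoc]
    rw [intervalIntegral.integral_const_mul, integral_poly_exp_neg (mX-1) lX hlX (Pth/Px),
      show (mX-1)+1 = mX by omega,
      show lX * (Pth/Px) = (mX:ℝ)*Pth/(ΩX*Px) by rw [hlXdef]; ring]
    have hlXne : lX^mX ≠ 0 := pow_ne_zero _ hlX.ne'
    field_simp
  -- Step 10: tail integrals
  have hIL : ∫ x in Δ1..(Pth/Px), pc x * (Real.exp (-(lY * Lfun x)) *
        ∑ k ∈ range mY, (lY * Lfun x)^k / k.factorial)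
      = (lX ^ mX * Real.exp (-((mY:ℝ) * Pth / (ΩY * Py))) / (mX-1).factorial) *
          ∑ k ∈ range mY, (((mY:ℝ) / (ΩY * Py)) ^ k / (Nat.factorial k : ℝ)) *
            ∑ q ∈ range (k + 1), (Nat.choose k q : ℝ) * Pth ^ q * (-Px) ^ (k - q) *
              ∑ t ∈ range (mX + k - q - 1 + 1),
                ((-1 : ℝ) ^ t * (Nat.factorial t : ℝ) *
                    (Nat.choose (mX + k - q - 1) t : ℝ) / Ξ ^ (t + 1)) *
                  (Real.exp (Ξ * Pth / Px) * (Pth / Px) ^ (mX + k - q - 1 - t)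
                    - Real.exp (Ξ * Δ1) * Δ1 ^ (mX + k - q - 1 - t)) := by
    have e1 : lY * Pth / Py = (mY:ℝ)*Pth/(ΩY*Py) := by rw [hlYdef]; ring
    have e2 : lY / Py = (mY:ℝ)/(ΩY*Py) := by rw [hlYdef]; ring
    have hΞdef' : Ξ = lY * Px / Py - lX := by rw [hΞ, hlYdef]; ring
    have hL := tailL_integral mX mY hmX1 lX lY Px Py Pth Δ1 Ξ hPy.ne' hΞdef' hΞne
    simp only [hpc, hLfun]
    rw [hL]
    simp only [e1, e2]
  have hIG : ∫ x in (0:ℝ)..Δ1, pc x * (Real.exp (-(lY * gfun x)) *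
        ∑ p ∈ range mY, (lY * gfun x)^p / p.factorial)
      = (lX ^ mX / (mX-1).factorial) * Real.exp (-((mY:ℝ) * γbar * ε2 / (ΩY * Θ))) *
          ∑ p ∈ range mY, (((mY:ℝ) / (ΩY * Θ)) ^ p / (Nat.factorial p : ℝ)) *
            ∑ n ∈ range (p + 1), (Nat.choose p n : ℝ) * γbar ^ p * ε2 ^ n * ε3 ^ (p - n) *
              lowerIncGamma ((mX : ℝ) + p - n) (Ψ * Δ1) * (Ψ ^ (mX + p - n))⁻¹ := by
    have e3 : lY * γbar * ε2 / Θ = (mY:ℝ)*γbar*ε2/(ΩY*Θ) := by rw [hlYdef]; ring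
    have e4 : lY / Θ = (mY:ℝ)/(ΩY*Θ) := by rw [hlYdef]; ring
    have hΨdef' : Ψ = lX + lY * γbar * ε3 / Θ := by rw [hΨ, hlYdef]; ring
    have hΨpos : 0 < Ψ := by
      rw [hΨ]
      exact add_pos hlX (div_pos (mul_pos (mul_pos hmYR hγ) hε3) (mul_pos hΩY hΘ))
    have hG := tailG_integral mX mY hmX1 lX lY γbar ε2 ε3 Θ Δ1 Ψ hΘ.ne' hΨdef' hΨpos
    simp only [hpc, hgfun]
    rw [hG]
    simp only [e3, e4]
  -- final assembly
  rw [hPT, hST, h2, h3, h4, h5, h6, h7, h8, hIL, hIG, Gamma_nat' mX hmX1]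
  linarith [h9]
end

section
/- Let X and Y be independent nonnegative random variables, where Y has density f_Y and X has a continuous CDF F_X. Let Px, Py, Pth, Λ1, Λ2 be positive reals and Δ2 := (Λ2·Pth + Λ1·Px)/(Px + Py·Λ2). Then Pr[ X > (Y − Λ1)/Λ2 and Px·X + Py·Y > Pth ] = ∫_{Δ2}^{∞} f_Y(y)·(1 − F_X((y − Λ1)/Λ2)) dy + ∫_{0}^{Δ2} f_Y(y)·(1 − F_X((Pth − Py·y)/Px)) dy. -/
open MeasureTheory
open scoped ENNReal

/-- Double-integral decomposition used to compute the CDF of the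
saturated-regime relay SNR jointly with the saturation event
`Px·X + Py·Y > Pth`: the plane splits at the crossing point `Δ2` of the lower
bounds `(y − Λ1)/Λ2` and `(Pth − Py·y)/Px` on `X`. -/
theorem stmt_8 {Ω : Type*} [MeasurableSpace Ω]
    (ℙ : Measure Ω) [IsProbabilityMeasure ℙ]
    (X Y : Ω → ℝ) (hmX : Measurable X) (hmY : Measurable Y)
    (hindep : ProbabilityTheory.IndepFun X Y ℙ)
    (hXpos : ∀ᵐ ω ∂ℙ, 0 ≤ X ω) (hYpos : ∀ᵐ ω ∂ℙ, 0 ≤ Y ω)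
    (fY : ℝ → ℝ)
    (hfY : ∀ s : Set ℝ, MeasurableSet s → (ℙ (Y ⁻¹' s)).toReal = ∫ y in s, fY y)
    (FX : ℝ → ℝ) (hFXcont : Continuous FX)
    (hFX : ∀ x : ℝ, FX x = (ℙ {ω | X ω ≤ x}).toReal)
    (Px Py Pth Λ1 Λ2 : ℝ)
    (hPx : 0 < Px) (hPy : 0 < Py) (hPth : 0 < Pth) (hΛ1 : 0 < Λ1) (hΛ2 : 0 < Λ2)
    (Δ2 : ℝ) (hΔ2 : Δ2 = (Λ2 * Pth + Λ1 * Px) / (Px + Py * Λ2)) :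
    (ℙ {ω | X ω > (Y ω - Λ1) / Λ2 ∧ Px * X ω + Py * Y ω > Pth}).toReal =
      (∫ y in Set.Ioi Δ2, fY y * (1 - FX ((y - Λ1) / Λ2))) +
      ∫ y in (0 : ℝ)..Δ2, fY y * (1 - FX ((Pth - Py * y) / Px)) := by
  -- the max of the two lower bounds on X
  set m : ℝ → ℝ := fun y => max ((y - Λ1) / Λ2) ((Pth - Py * y) / Px) with hm
  have hmc : Continuous m := by
    apply Continuous.max
    · exact (continuous_id.sub continuous_const).div_const _
    · exact (continuous_const.sub (continuous_const.mul continuous_id)).div_const _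
  -- FX is between 0 and 1
  have hFX0 : ∀ t, 0 ≤ FX t := fun t => by rw [hFX]; exact ENNReal.toReal_nonneg
  have hFX1 : ∀ t, FX t ≤ 1 := fun t => by
    rw [hFX]
    have := prob_le_one (μ := ℙ) (s := {ω | X ω ≤ t})
    calc (ℙ {ω | X ω ≤ t}).toReal ≤ (1 : ℝ≥0∞).toReal :=
      ENNReal.toReal_mono (by norm_num) this
    _ = 1 := by simp
  -- positivity of Δ2
  have hD : 0 < Px + Py * Λ2 := by positivity
  have hΔ2pos : 0 < Δ2 := by rw [hΔ2]; positivity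
  have hΔ2eq : Δ2 * (Px + Py * Λ2) = Λ2 * Pth + Λ1 * Px := by
    rw [hΔ2]; field_simp
  -- crossing inequalities
  have hcross1 : ∀ y : ℝ, y ≤ Δ2 → (y - Λ1) / Λ2 ≤ (Pth - Py * y) / Px := by
    intro y hy
    rw [div_le_div_iff₀ hΛ2 hPx]
    nlinarith [mul_le_mul_of_nonneg_right hy hD.le]
  have hcross2 : ∀ y : ℝ, Δ2 ≤ y → (Pth - Py * y) / Px ≤ (y - Λ1) / Λ2 := by
    intro y hy
    rw [div_le_div_iff₀ hPx hΛ2]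
    nlinarith [mul_le_mul_of_nonneg_right hy hD.le]
  -- fY is integrable
  have hintfY : Integrable fY := by
    by_contra h
    have h1 := hfY Set.univ MeasurableSet.univ
    rw [Set.preimage_univ, measure_univ, Measure.restrict_univ, integral_undef h] at h1
    norm_num at h1
  -- measurable representative g of fY
  obtain ⟨g, hgsm, hge⟩ := hintfY.aestronglyMeasurable
  have hgm : Measurable g := hgsm.measurable
  have hgint : Integrable g := hintfY.congr hge
  have hsetint : ∀ s : Set ℝ, MeasurableSet s → (ℙ (Y ⁻¹' s)).toReal = ∫ y in s, g y := by
    intro s hs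
    rw [hfY s hs]
    exact setIntegral_congr_ae hs (hge.mono fun y hy _ => hy)
  -- g is nonnegative a.e.
  have hg0 : ∀ᵐ y : ℝ, 0 ≤ g y := by
    set s : Set ℝ := {y | g y < 0} with hsdef
    have hs : MeasurableSet s := measurableSet_lt hgm measurable_const
    have h1 : 0 ≤ ∫ y in s, g y := by
      rw [← hsetint s hs]; exact ENNReal.toReal_nonneg
    have h2 : ∫ y in s, g y ≤ 0 := setIntegral_nonpos hs fun y hy => le_of_lt hy
    have h3 : ∫ y in s, -g y = 0 := by
      rw [integral_neg]; linarith
    have h4 : (fun y => -g y) =ᵐ[volume.restrict s] 0 := by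
      refine (setIntegral_eq_zero_iff_of_nonneg_ae ?_ (hgint.neg.integrableOn)).mp h3
      refine (ae_restrict_iff' hs).mpr (Filter.Eventually.of_forall fun y hy => ?_)
      simp only [hsdef, Set.mem_setOf_eq] at hy
      show (0 : ℝ) ≤ -g y
      linarith
    have h5 : ∀ᵐ y : ℝ, y ∈ s → -g y = 0 := (ae_restrict_iff' hs).mp h4
    filter_upwards [h5] with y hy
    by_contra hcon
    push_neg at hcon
    have : y ∈ s := hcon
    have := hy this
    linarith [hcon]
  -- law of Y is withDensity of g
  have hμY : ℙ.map Y = volume.withDensity (fun y => ENNReal.ofReal (g y)) := by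
    refine Measure.ext fun s hs => ?_
    rw [Measure.map_apply hmY hs, withDensity_apply _ hs,
      ← ofReal_integral_eq_lintegral_ofReal hgint.integrableOn
        (ae_restrict_of_ae hg0),
      ← hsetint s hs, ENNReal.ofReal_toReal (measure_ne_top _ _)]
  have _instX : IsProbabilityMeasure (ℙ.map X) := Measure.isProbabilityMeasure_map hmX.aemeasurable
  have _instY : IsProbabilityMeasure (ℙ.map Y) := Measure.isProbabilityMeasure_map hmY.aemeasurable
  -- CDF facts for X
  have hμXIic : ∀ t : ℝ, (ℙ.map X) (Set.Iic t) = ENNReal.ofReal (FX t) := by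
    intro t
    rw [Measure.map_apply hmX measurableSet_Iic, hFX t,
      ENNReal.ofReal_toReal (measure_ne_top _ _)]
    rfl
  have hμXIoi : ∀ t : ℝ, (ℙ.map X) (Set.Ioi t) = ENNReal.ofReal (1 - FX t) := by
    intro t
    rw [← Set.compl_Iic, measure_compl measurableSet_Iic (measure_ne_top _ _), hμXIic,
      measure_univ, ENNReal.ofReal_sub _ (hFX0 t), ENNReal.ofReal_one]
  -- rewrite the event
  have hset : {ω | X ω > (Y ω - Λ1) / Λ2 ∧ Px * X ω + Py * Y ω > Pth}
      = (fun ω => (X ω, Y ω)) ⁻¹' {p : ℝ × ℝ | m p.2 < p.1} := by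
    ext ω
    simp only [Set.mem_setOf_eq, Set.mem_preimage, hm, max_lt_iff, gt_iff_lt]
    constructor
    · rintro ⟨h1, h2⟩
      refine ⟨h1, ?_⟩
      rw [div_lt_iff₀ hPx]
      nlinarith
    · rintro ⟨h1, h2⟩
      rw [div_lt_iff₀ hPx] at h2
      exact ⟨h1, by nlinarith⟩
  have hA : MeasurableSet {p : ℝ × ℝ | m p.2 < p.1} :=
    measurableSet_lt (hmc.measurable.comp measurable_snd) measurable_fst
  -- express the probability as a lintegral
  have key : ℙ {ω | X ω > (Y ω - Λ1) / Λ2 ∧ Px * X ω + Py * Y ω > Pth}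
      = ∫⁻ y, ENNReal.ofReal (g y) * ENNReal.ofReal (1 - FX (m y)) := by
    rw [hset, ← Measure.map_apply (hmX.prodMk hmY) hA,
      (ProbabilityTheory.indepFun_iff_map_prod_eq_prod_map_map hmX.aemeasurable
        hmY.aemeasurable).mp hindep,
      Measure.prod_apply_symm hA]
    have hslice : ∀ y : ℝ, (fun x => (x, y)) ⁻¹' {p : ℝ × ℝ | m p.2 < p.1} = Set.Ioi (m y) :=
      fun y => rfl
    calc ∫⁻ y, (ℙ.map X) ((fun x => (x, y)) ⁻¹' {p : ℝ × ℝ | m p.2 < p.1}) ∂(ℙ.map Y)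
        = ∫⁻ y, ENNReal.ofReal (1 - FX (m y)) ∂(ℙ.map Y) := by
          refine lintegral_congr fun y => ?_
          rw [hslice y, hμXIoi]
      _ = ∫⁻ y, ENNReal.ofReal (g y) * ENNReal.ofReal (1 - FX (m y)) := by
          rw [hμY]
          have hgm' : Measurable fun y : ℝ => ENNReal.ofReal (g y) := hgm.ennreal_ofReal
          have hh : Measurable fun y : ℝ => ENNReal.ofReal (1 - FX (m y)) :=
            ((continuous_const.sub (hFXcont.comp hmc)).measurable).ennreal_ofReal
          rw [lintegral_withDensity_eq_lintegral_mul _ hgm' hh]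
          rfl
  -- the real integrand
  set F : ℝ → ℝ := fun y => g y * (1 - FX (m y)) with hF
  have hFmeas : Measurable F := hgm.mul
    ((continuous_const.sub (hFXcont.comp hmc)).measurable)
  have hFint : Integrable F := by
    refine hgint.abs.mono' hFmeas.aestronglyMeasurable ?_
    refine Filter.Eventually.of_forall fun y => ?_
    rw [hF]
    simp only [Real.norm_eq_abs, abs_mul]
    have h1 : |1 - FX (m y)| ≤ 1 := by
      rw [abs_le]; constructor <;> [linarith [hFX1 (m y)]; linarith [hFX0 (m y)]]
    nlinarith [abs_nonneg (g y), abs_nonneg (1 - FX (m y))]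
  have hFnn : ∀ᵐ y : ℝ, 0 ≤ F y := by
    filter_upwards [hg0] with y hy
    exact mul_nonneg hy (by linarith [hFX1 (m y)])
  have key2 : (ℙ {ω | X ω > (Y ω - Λ1) / Λ2 ∧ Px * X ω + Py * Y ω > Pth}).toReal
      = ∫ y, F y := by
    have h1 : ∫⁻ y, ENNReal.ofReal (g y) * ENNReal.ofReal (1 - FX (m y))
        = ∫⁻ y, ENNReal.ofReal (F y) := by
      refine lintegral_congr_ae ?_
      filter_upwards [hg0] with y hy
      rw [hF]
      rw [ENNReal.ofReal_mul hy]
    rw [key, h1, ← ofReal_integral_eq_lintegral_ofReal hFint hFnn,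
      ENNReal.toReal_ofReal (integral_nonneg_of_ae hFnn)]
  rw [key2]
  -- split the integral at Δ2
  have hsplit : ∫ y, F y = (∫ y in Set.Iic Δ2, F y) + ∫ y in Set.Ioi Δ2, F y := by
    rw [← integral_add_compl measurableSet_Iic hFint, Set.compl_Iic]
  -- The probability that Y ≤ 0 is zero
  have h1 : ℙ (Y ⁻¹' Set.Iio 0) = 0 := by
    refine measure_mono_null (fun ω hω => not_le.mpr hω) (ae_iff.mp hYpos)
  have h2 : ℙ (Y ⁻¹' {0}) = 0 := by
    have hz : ∫ y in ({0} : Set ℝ), g y = 0 := by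
      rw [Measure.restrict_eq_zero.mpr Real.volume_singleton, integral_zero_measure]
    have h := hsetint {0} (measurableSet_singleton 0)
    rw [hz] at h
    exact ((ENNReal.toReal_eq_zero_iff _).mp h).resolve_right (measure_ne_top _ _)
  have hIic0 : ℙ (Y ⁻¹' Set.Iic 0) = 0 := by
    refine measure_mono_null (fun ω hω => ?_) (measure_union_null h1 h2)
    have hle : Y ω ≤ 0 := hω
    rcases lt_or_eq_of_le hle with h | h
    · exact Or.inl h
    · exact Or.inr h
  -- hence g vanishes a.e. on Iic 0
  have hg0' : g =ᵐ[volume.restrict (Set.Iic 0)] 0 := by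
    have hint0 : ∫ y in Set.Iic 0, g y = 0 := by
      rw [← hsetint _ measurableSet_Iic, hIic0]; simp
    exact (setIntegral_eq_zero_iff_of_nonneg_ae (ae_restrict_of_ae hg0)
      hgint.integrableOn).mp hint0
  have hIic : ∫ y in Set.Iic Δ2, F y = ∫ y in Set.Ioc 0 Δ2, F y := by
    have hu : Set.Iic 0 ∪ Set.Ioc 0 Δ2 = Set.Iic Δ2 := Set.Iic_union_Ioc_eq_Iic hΔ2pos.le
    rw [← hu, setIntegral_union (Set.Iic_disjoint_Ioc le_rfl) measurableSet_Ioc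
      hFint.integrableOn hFint.integrableOn]
    have hzero : ∫ y in Set.Iic 0, F y = 0 := by
      have hFz : F =ᵐ[volume.restrict (Set.Iic 0)] 0 := by
        filter_upwards [hg0'] with y hy
        have : g y = 0 := hy
        simp [hF, this]
      rw [integral_congr_ae hFz]
      simp
    rw [hzero, zero_add]
  -- rewrite F on each region
  have hIoi_eq : ∫ y in Set.Ioi Δ2, F y
      = ∫ y in Set.Ioi Δ2, fY y * (1 - FX ((y - Λ1) / Λ2)) := by
    refine setIntegral_congr_ae measurableSet_Ioi ?_
    filter_upwards [hge] with y hy hmem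
    have hmax : m y = (y - Λ1) / Λ2 := max_eq_left (hcross2 y (le_of_lt hmem))
    rw [hF]
    simp only []
    rw [hmax, hy]
  have hIoc_eq : ∫ y in Set.Ioc 0 Δ2, F y
      = ∫ y in Set.Ioc 0 Δ2, fY y * (1 - FX ((Pth - Py * y) / Px)) := by
    refine setIntegral_congr_ae measurableSet_Ioc ?_
    filter_upwards [hge] with y hy hmem
    have hmax : m y = (Pth - Py * y) / Px := max_eq_right (hcross1 y hmem.2)
    rw [hF]
    simp only []
    rw [hmax, hy]
  have hinterval : ∫ y in (0:ℝ)..Δ2, fY y * (1 - FX ((Pth - Py * y) / Px))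
      = ∫ y in Set.Ioc 0 Δ2, fY y * (1 - FX ((Pth - Py * y) / Px)) :=
    intervalIntegral.integral_of_le hΔ2pos.le
  rw [hsplit, hIic, hIoi_eq, hIoc_eq, hinterval, add_comm]
end

section
/- Let X and Y be independent random variables, X Gamma-distributed with positive integer shape mX and rate mX/ΩX, Y Gamma-distributed with positive integer shape mY and rate mY/ΩY, where ΩX, ΩY > 0. Let Px, Py, Pth, Λ1, Λ2 be positive reals, set Δ2 := (Λ2·Pth + Λ1·Px)/(Px + Py·Λ2), and assume Py·Λ1 ≤ Pth (equivalently Λ1 ≤ Δ2 ≤ Pth/Py). Then the infinite series below converges absolutely and Pr[ X > (Y − Λ1)/Λ2 and Px·X + Py·Y > Pth ] = Σ_{k=0}^{mX−1} (1/k!)·(mX/(ΩX·Λ2))^k · Σ_{q=0}^{k} C(k,q)·(−Λ1)^{k−q}·e^{mX·Λ1/(ΩX·Λ2)} · ((mY/ΩY)^{mY}/Γ[mY]) · Γ[mY + q, (mY/ΩY + mX/(ΩX·Λ2))·Δ2] · (mY/ΩY + mX/(ΩX·Λ2))^{−(mY+q)} + Σ_{p=0}^{mX−1} (1/p!)·(mX/(ΩX·Px))^p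 · Σ_{n=0}^{p} C(p,n)·Pth^n·(−Py)^{p−n} · ((mY/ΩY)^{mY}/Γ[mY]) · e^{−mX·Pth/(ΩX·Px)} · Σ_{s=0}^{∞} ((mX·Py/(ΩX·Px))^s/s!) · Υ[mY + p + s − n, (mY/ΩY)·Δ2] · (mY/ΩY)^{−(mY+p+s−n)}, where C(·,·) denotes the binomial coefficient. -/
open MeasureTheory Finset

/-- Upper incomplete gamma function `Γ[s, x] = ∫_x^∞ t^{s−1} e^{−t} dt`. -/
noncomputable def upperIncGamma (s x : ℝ) : ℝ :=
  ∫ t in Set.Ioi x, t ^ (s - 1) * Real.exp (-t)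

section Helpers
open Set

noncomputable def erlangS (l : ℝ) (n : ℕ) (x : ℝ) : ℝ :=
  ∑ k ∈ range n, l ^ k * x ^ k / (Nat.factorial k) * Real.exp (-(l * x))

lemma erlangS_hasDerivAt (l : ℝ) (n : ℕ) (x : ℝ) :
    HasDerivAt (erlangS l (n + 1))
      (-(l ^ (n + 1) * x ^ n / (Nat.factorial n) * Real.exp (-(l * x)))) x := by
  have hexp : HasDerivAt (fun y : ℝ => Real.exp (-(l * y))) (Real.exp (-(l * x)) * (-(l * 1))) x :=
    (((hasDerivAt_id x).const_mul l).neg).exp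
  induction n with
  | zero =>
      have heq : erlangS l 1 = fun y : ℝ => Real.exp (-(l * y)) := by
        funext y; unfold erlangS; simp
      rw [heq]
      convert hexp using 1
      simp [mul_comm]
  | succ n ih =>
      have hf : HasDerivAt (fun y : ℝ => l ^ (n + 1) * y ^ (n + 1) / (Nat.factorial (n + 1)))
          (l ^ (n + 1) * (((n:ℝ) + 1) * x ^ n) / (Nat.factorial (n + 1))) x := by
        have := ((hasDerivAt_pow (n + 1) x).const_mul (l ^ (n + 1))).div_const
          ((Nat.factorial (n + 1) : ℝ))
        refine this.congr_deriv ?_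
        push_cast
        ring_nf
      have hterm := hf.mul hexp
      have hsum := ih.add hterm
      have heq : erlangS l (n + 1 + 1) = fun y =>
          erlangS l (n + 1) y + l ^ (n + 1) * y ^ (n + 1) / (Nat.factorial (n + 1)) * Real.exp (-(l * y)) := by
        funext y; unfold erlangS; rw [Finset.sum_range_succ]
      rw [heq]
      refine hsum.congr_deriv ?_
      have hfac : ((Nat.factorial (n + 1) : ℝ)) = (n + 1) * (Nat.factorial n) := by
        push_cast [Nat.factorial_succ]; ring
      have h1 : (Nat.factorial n : ℝ) ≠ 0 := Nat.cast_ne_zero.mpr (Nat.factorial_ne_zero n)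
      have h2 : ((n : ℝ) + 1) ≠ 0 := by positivity
      rw [hfac]
      field_simp
      ring

lemma erlangS_continuous (l : ℝ) (n : ℕ) : Continuous (erlangS l n) := by
  unfold erlangS
  exact continuous_finset_sum _ fun k _ =>
    (((continuous_const.mul (continuous_pow k)).div_const _).mul
      ((continuous_const.mul continuous_id).neg.rexp))

lemma erlangS_tendsto_zero {l : ℝ} (hl : 0 < l) (n : ℕ) :
    Filter.Tendsto (erlangS l n) Filter.atTop (nhds 0) := by
  unfold erlangS
  have h0 : (0:ℝ) = ∑ k ∈ range n, 0 := by simp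
  rw [h0]
  apply tendsto_finset_sum
  intro k _
  have hcomp : Filter.Tendsto (fun x : ℝ => l * x) Filter.atTop Filter.atTop :=
    Filter.Tendsto.const_mul_atTop hl Filter.tendsto_id
  have h1 := (Real.tendsto_pow_mul_exp_neg_atTop_nhds_zero k).comp hcomp
  have h2 : Filter.Tendsto (fun x : ℝ => (1 / (Nat.factorial k : ℝ)) * ((l * x) ^ k * Real.exp (-(l * x))))
      Filter.atTop (nhds ((1 / (Nat.factorial k : ℝ)) * 0)) := h1.const_mul _
  rw [mul_zero] at h2
  apply h2.congr
  intro x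
  rw [mul_pow]
  ring

lemma erlangS_nonneg {l : ℝ} (hl : 0 ≤ l) {n : ℕ} {x : ℝ} (hx : 0 ≤ x) :
    0 ≤ erlangS l n x := by
  unfold erlangS
  exact Finset.sum_nonneg fun k _ => by positivity

lemma integral_Ioi_erlang {l : ℝ} (hl : 0 < l) (n : ℕ) {a : ℝ} (ha : 0 ≤ a) :
    ∫ x in Ioi a, l ^ (n + 1) * x ^ n / (Nat.factorial n) * Real.exp (-(l * x)) =
      erlangS l (n + 1) a := by
  have hderiv : ∀ x ∈ Ici a, HasDerivAt (fun y => -erlangS l (n + 1) y)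
      (l ^ (n + 1) * x ^ n / (Nat.factorial n) * Real.exp (-(l * x))) x := by
    intro x _
    have h := (erlangS_hasDerivAt l n x).neg; rw [neg_neg] at h; exact h
  have hpos : ∀ x ∈ Ioi a, 0 ≤ l ^ (n + 1) * x ^ n / (Nat.factorial n) * Real.exp (-(l * x)) := by
    intro x hx
    have hx0 : 0 ≤ x := le_trans ha (le_of_lt hx)
    positivity
  have htend : Filter.Tendsto (fun y => -erlangS l (n + 1) y) Filter.atTop (nhds 0) := by
    simpa using (erlangS_tendsto_zero hl (n + 1)).neg
  have := integral_Ioi_of_hasDerivAt_of_nonneg' hderiv hpos htend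
  simpa using this

lemma integrableOn_Ioi_erlang {l : ℝ} (hl : 0 < l) (n : ℕ) {a : ℝ} (ha : 0 ≤ a) :
    IntegrableOn (fun x => l ^ (n + 1) * x ^ n / (Nat.factorial n) * Real.exp (-(l * x)))
      (Ioi a) := by
  have hderiv : ∀ x ∈ Ici a, HasDerivAt (fun y => -erlangS l (n + 1) y)
      (l ^ (n + 1) * x ^ n / (Nat.factorial n) * Real.exp (-(l * x))) x := by
    intro x _
    have h := (erlangS_hasDerivAt l n x).neg; rw [neg_neg] at h; exact h
  have hpos : ∀ x ∈ Ioi a, 0 ≤ l ^ (n + 1) * x ^ n / (Nat.factorial n) * Real.exp (-(l * x)) := by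
    intro x hx
    have hx0 : 0 ≤ x := le_trans ha (le_of_lt hx)
    positivity
  have htend : Filter.Tendsto (fun y => -erlangS l (n + 1) y) Filter.atTop (nhds 0) := by
    simpa using (erlangS_tendsto_zero hl (n + 1)).neg
  exact integrableOn_Ioi_deriv_of_nonneg' hderiv hpos htend

/-- integrability of monomial times decaying exponential -/
lemma integrableOn_pow_exp {l : ℝ} (hl : 0 < l) (n : ℕ) {a : ℝ} (ha : 0 ≤ a) :
    IntegrableOn (fun x => x ^ n * Real.exp (-(l * x))) (Ioi a) := by
  have h : IntegrableOn
      (fun x => (Nat.factorial n : ℝ) / l ^ (n + 1) *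
        (l ^ (n + 1) * x ^ n / (Nat.factorial n) * Real.exp (-(l * x)))) (Ioi a) :=
    (integrableOn_Ioi_erlang hl n ha).const_mul _
  apply h.congr_fun ?_ measurableSet_Ioi
  intro x _
  have h1 : (Nat.factorial n : ℝ) ≠ 0 := Nat.cast_ne_zero.mpr (Nat.factorial_ne_zero n)
  field_simp

lemma gammaMeasure_Ioi {l : ℝ} (hl : 0 < l) (n : ℕ) {a : ℝ} (ha : 0 ≤ a) :
    ProbabilityTheory.gammaMeasure ((n + 1 : ℕ) : ℝ) l (Ioi a) =
      ENNReal.ofReal (erlangS l (n + 1) a) := by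
  rw [ProbabilityTheory.gammaMeasure, withDensity_apply _ measurableSet_Ioi]
  have hcongr : ∀ x ∈ Ioi a, ProbabilityTheory.gammaPDF ((n + 1 : ℕ) : ℝ) l x =
      ENNReal.ofReal (l ^ (n + 1) * x ^ n / (Nat.factorial n) * Real.exp (-(l * x))) := by
    intro x hx
    have hx0 : (0:ℝ) ≤ x := le_trans ha hx.le
    rw [ProbabilityTheory.gammaPDF_of_nonneg hx0]
    congr 1
    have h1 : l ^ (((n + 1 : ℕ)) : ℝ) = l ^ (n + 1) := Real.rpow_natCast l (n + 1)
    have h2 : x ^ ((((n + 1 : ℕ)) : ℝ) - 1) = x ^ n := by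
      have h : (((n + 1 : ℕ)) : ℝ) - 1 = ((n : ℕ) : ℝ) := by push_cast; ring
      rw [h, Real.rpow_natCast]
    have h3 : Real.Gamma (((n + 1 : ℕ)) : ℝ) = (Nat.factorial n : ℝ) := by
      have h : (((n + 1 : ℕ)) : ℝ) = (n : ℝ) + 1 := by push_cast; ring
      rw [h, Real.Gamma_nat_eq_factorial]
    rw [h1, h2, h3]
    ring
  rw [setLIntegral_congr_fun measurableSet_Ioi hcongr]
  have hnn : 0 ≤ᵐ[volume.restrict (Ioi a)]
      (fun x => l ^ (n + 1) * x ^ n / (Nat.factorial n) * Real.exp (-(l * x))) := by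
    rw [Filter.EventuallyLE, ae_restrict_iff' measurableSet_Ioi]
    refine Filter.Eventually.of_forall fun x hx => ?_
    have hx0 : (0:ℝ) ≤ x := le_trans ha hx.le
    positivity
  rw [← ofReal_integral_eq_lintegral_ofReal (integrableOn_Ioi_erlang hl n ha) hnn,
    integral_Ioi_erlang hl n ha]

lemma pow_cast_eq (m : ℕ) : ∀ t : ℝ,
    t ^ ((((m + 1 : ℕ)) : ℝ) - 1) * Real.exp (-t) = t ^ m * Real.exp (-t) := by
  intro t
  have h : (((m + 1 : ℕ)) : ℝ) - 1 = ((m : ℕ) : ℝ) := by push_cast; ring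
  rw [h, Real.rpow_natCast]

lemma erlangS_one (l x : ℝ) (n : ℕ) : erlangS 1 n (l * x) = erlangS l n x := by
  unfold erlangS
  refine Finset.sum_congr rfl fun k _ => ?_
  rw [one_pow, mul_pow, one_mul, one_mul]

lemma integral_Ioi_pow_exp_beta {β : ℝ} (hβ : 0 < β) (m : ℕ) {a : ℝ} (ha : 0 ≤ a) :
    ∫ y in Ioi a, y ^ m * Real.exp (-(β * y)) =
      (Nat.factorial m : ℝ) / β ^ (m + 1) * erlangS β (m + 1) a := by
  have h := integral_Ioi_erlang hβ m ha
  have hfac : (Nat.factorial m : ℝ) ≠ 0 := Nat.cast_ne_zero.mpr (Nat.factorial_ne_zero m)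
  have hcongr : ∀ y ∈ Ioi a, y ^ m * Real.exp (-(β * y)) =
      ((Nat.factorial m : ℝ) / β ^ (m + 1)) *
        (β ^ (m + 1) * y ^ m / (Nat.factorial m) * Real.exp (-(β * y))) := by
    intro y _
    field_simp
  rw [setIntegral_congr_fun measurableSet_Ioi hcongr, MeasureTheory.integral_const_mul, h]

lemma upperIncGamma_eq_erlangS (m : ℕ) {x : ℝ} (hx : 0 ≤ x) :
    upperIncGamma ((m + 1 : ℕ) : ℝ) x = (Nat.factorial m : ℝ) * erlangS 1 (m + 1) x := by
  unfold upperIncGamma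
  simp only [pow_cast_eq]
  have h : ∫ t in Ioi x, t ^ m * Real.exp (-(1 * t)) =
      (Nat.factorial m : ℝ) / 1 ^ (m + 1) * erlangS 1 (m + 1) x :=
    integral_Ioi_pow_exp_beta one_pos m hx
  simp only [one_mul, one_pow, div_one] at h
  exact h

lemma integral_Ioi_pow_exp_UIG {β : ℝ} (hβ : 0 < β) (m : ℕ) {a : ℝ} (ha : 0 ≤ a) :
    ∫ y in Ioi a, y ^ m * Real.exp (-(β * y)) =
      upperIncGamma ((m + 1 : ℕ) : ℝ) (β * a) * (β ^ (m + 1))⁻¹ := by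
  rw [integral_Ioi_pow_exp_beta hβ m ha,
    upperIncGamma_eq_erlangS m (by positivity : (0:ℝ) ≤ β * a), erlangS_one]
  field_simp

lemma integral_interval_pow_exp_LIG {β : ℝ} (hβ : 0 < β) (m : ℕ) (Δ : ℝ) :
    ∫ y in (0:ℝ)..Δ, y ^ m * Real.exp (-(β * y)) =
      lowerIncGamma ((m + 1 : ℕ) : ℝ) (β * Δ) * (β ^ (m + 1))⁻¹ := by
  have hL : lowerIncGamma ((m + 1 : ℕ) : ℝ) (β * Δ) =
      ∫ t in (0:ℝ)..(β * Δ), t ^ m * Real.exp (-t) := by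
    unfold lowerIncGamma
    simp only [pow_cast_eq]
  have hsub : ∫ y in (0:ℝ)..Δ, (fun t => t ^ m * Real.exp (-t)) (β * y) =
      β⁻¹ • ∫ t in (β * 0)..(β * Δ), t ^ m * Real.exp (-t) :=
    intervalIntegral.integral_comp_mul_left (a := (0:ℝ)) (b := Δ)
      (fun t => t ^ m * Real.exp (-t)) (ne_of_gt hβ)
  simp only [mul_zero, smul_eq_mul] at hsub
  have hcongr : ∀ y : ℝ, (fun t => t ^ m * Real.exp (-t)) (β * y) =
      β ^ m * (y ^ m * Real.exp (-(β * y))) := by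
    intro y; simp only [mul_pow]; ring
  simp only [hcongr] at hsub
  rw [intervalIntegral.integral_const_mul] at hsub
  rw [hL]
  have hβm : (β : ℝ) ^ m ≠ 0 := by positivity
  have hβ0 : (β : ℝ) ≠ 0 := ne_of_gt hβ
  have h2 : ∫ y in (0:ℝ)..Δ, y ^ m * Real.exp (-(β * y)) =
      (β ^ m)⁻¹ * (β ^ m * ∫ y in (0:ℝ)..Δ, y ^ m * Real.exp (-(β * y))) := by
    field_simp
  rw [h2, hsub, pow_succ, mul_inv]
  ring

lemma gammaPDFReal_nat {l : ℝ} (m : ℕ) {y : ℝ} (hy : 0 ≤ y) :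
    ProbabilityTheory.gammaPDFReal ((m + 1 : ℕ) : ℝ) l y =
      l ^ (m + 1) / (Nat.factorial m) * y ^ m * Real.exp (-(l * y)) := by
  rw [ProbabilityTheory.gammaPDFReal, if_pos hy]
  have h1 : l ^ (((m + 1 : ℕ)) : ℝ) = l ^ (m + 1) := Real.rpow_natCast l (m + 1)
  have h2 : y ^ ((((m + 1 : ℕ)) : ℝ) - 1) = y ^ m := by
    have h : (((m + 1 : ℕ)) : ℝ) - 1 = ((m : ℕ) : ℝ) := by push_cast; ring
    rw [h, Real.rpow_natCast]
  have h3 : Real.Gamma (((m + 1 : ℕ)) : ℝ) = (Nat.factorial m : ℝ) := by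
    have h : (((m + 1 : ℕ)) : ℝ) = (m : ℝ) + 1 := by push_cast; ring
    rw [h, Real.Gamma_nat_eq_factorial]
  rw [h1, h2, h3]

lemma erlangS_le_one {l : ℝ} (hl : 0 < l) (n : ℕ) {a : ℝ} (ha : 0 ≤ a) :
    erlangS l (n + 1) a ≤ 1 := by
  have hsh : (0:ℝ) < ((n + 1 : ℕ) : ℝ) := by exact_mod_cast Nat.succ_pos n
  have hp : IsProbabilityMeasure (ProbabilityTheory.gammaMeasure ((n + 1 : ℕ) : ℝ) l) :=
    ProbabilityTheory.isProbabilityMeasure_gammaMeasure hsh hl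
  have hle := prob_le_one (μ := ProbabilityTheory.gammaMeasure ((n + 1 : ℕ) : ℝ) l) (s := Ioi a)
  rw [gammaMeasure_Ioi hl n ha] at hle
  exact ENNReal.ofReal_le_one.mp hle

lemma integrable_gammaPDFReal {a r : ℝ} (ha : 0 < a) (hr : 0 < r) :
    Integrable (ProbabilityTheory.gammaPDFReal a r) volume := by
  refine ⟨(ProbabilityTheory.measurable_gammaPDFReal a r).aestronglyMeasurable, ?_⟩
  rw [MeasureTheory.HasFiniteIntegral]
  have h : ∀ x : ℝ, ‖ProbabilityTheory.gammaPDFReal a r x‖ₑ =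
      ProbabilityTheory.gammaPDF a r x := by
    intro x
    rw [ProbabilityTheory.gammaPDF, ← Real.enorm_eq_ofReal
      (ProbabilityTheory.gammaPDFReal_nonneg ha hr x)]
  simp_rw [h]
  rw [ProbabilityTheory.lintegral_gammaPDF_eq_one ha hr]
  exact ENNReal.one_lt_top

lemma LIG_nonneg {β : ℝ} (hβ : 0 < β) (m : ℕ) {Δ : ℝ} (hΔ : 0 ≤ Δ) :
    0 ≤ lowerIncGamma ((m + 1 : ℕ) : ℝ) (β * Δ) * (β ^ (m + 1))⁻¹ := by
  rw [← integral_interval_pow_exp_LIG hβ m Δ]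
  apply intervalIntegral.integral_nonneg hΔ
  intro u hu
  have hu0 : 0 ≤ u := hu.1
  positivity

lemma LIG_le {β : ℝ} (hβ : 0 < β) (m : ℕ) {Δ : ℝ} (hΔ : 0 ≤ Δ) :
    lowerIncGamma ((m + 1 : ℕ) : ℝ) (β * Δ) * (β ^ (m + 1))⁻¹ ≤ Δ ^ (m + 1) := by
  rw [← integral_interval_pow_exp_LIG hβ m Δ]
  have h1 : ∫ y in (0:ℝ)..Δ, y ^ m * Real.exp (-(β * y)) ≤ ∫ _ in (0:ℝ)..Δ, Δ ^ m := by
    apply intervalIntegral.integral_mono_on hΔ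
    · exact ((continuous_pow m).mul
        ((continuous_const.mul continuous_id).neg.rexp)).intervalIntegrable 0 Δ
    · exact intervalIntegrable_const
    · intro x hx
      have hx0 : 0 ≤ x := hx.1
      calc x ^ m * Real.exp (-(β * x)) ≤ x ^ m * 1 := by
            apply mul_le_mul_of_nonneg_left _ (by positivity)
            exact Real.exp_le_one_iff.mpr (by nlinarith [hx.1])
        _ = x ^ m := mul_one _
        _ ≤ Δ ^ m := pow_le_pow_left₀ hx.1 hx.2 m
  rw [intervalIntegral.integral_const, smul_eq_mul, sub_zero] at h1
  calc _ ≤ Δ * Δ ^ m := h1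
    _ = Δ ^ (m + 1) := by ring

lemma termB_inner {lY c Δ : ℝ} (hlY : 0 < lY) (hc : 0 < c) (hΔ : 0 < Δ) (m1 : ℕ) :
    ∫ y in Ioc (0:ℝ) Δ, y ^ m1 * Real.exp (-(lY * y)) * Real.exp (c * y) =
      ∑' s : ℕ, (c ^ s / (Nat.factorial s : ℝ)) *
        (lowerIncGamma ((m1 + s + 1 : ℕ) : ℝ) (lY * Δ) * (lY ^ (m1 + s + 1))⁻¹) := by
  set f : ℕ → ℝ → ℝ := fun s y => (c ^ s / (Nat.factorial s : ℝ)) *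
    (y ^ (m1 + s) * Real.exp (-(lY * y))) with hf
  have hpt : ∀ y : ℝ, y ^ m1 * Real.exp (-(lY * y)) * Real.exp (c * y) = ∑' s, f s y := by
    intro y
    have hexp : Real.exp (c * y) = ∑' s : ℕ, (c * y) ^ s / (Nat.factorial s : ℝ) := by
      rw [Real.exp_eq_exp_ℝ, NormedSpace.exp_eq_tsum_div]
    rw [hexp, ← tsum_mul_left]
    refine tsum_congr fun s => ?_
    simp only [hf]
    rw [mul_pow, pow_add]
    ring
  simp_rw [hpt]
  have hmeas : ∀ s : ℕ, AEStronglyMeasurable (f s) (volume.restrict (Ioc (0:ℝ) Δ)) := by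
    intro s
    exact (((continuous_const.mul ((continuous_pow (m1 + s)).mul
      ((continuous_const.mul continuous_id).neg.rexp)))).aestronglyMeasurable).restrict
  have hbound : ∑' s : ℕ, ∫⁻ y in Ioc (0:ℝ) Δ, ‖f s y‖₊ ∂volume ≠ ⊤ := by
    have h1 : ∀ s : ℕ, ∫⁻ y in Ioc (0:ℝ) Δ, ‖f s y‖₊ ∂volume ≤
        ENNReal.ofReal (c ^ s / (Nat.factorial s : ℝ) * Δ ^ (m1 + s) * Δ) := by
      intro s
      have h2 : ∀ y ∈ Ioc (0:ℝ) Δ, (‖f s y‖₊ : ENNReal) ≤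
          ENNReal.ofReal (c ^ s / (Nat.factorial s : ℝ) * Δ ^ (m1 + s)) := by
        intro y hy
        have hy0 : 0 ≤ y := hy.1.le
        have hnn : 0 ≤ f s y := by simp only [hf]; positivity
        rw [← enorm_eq_nnnorm, ← ofReal_norm, Real.norm_eq_abs, abs_of_nonneg hnn]
        apply ENNReal.ofReal_le_ofReal
        simp only [hf]
        have hee : Real.exp (-(lY * y)) ≤ 1 := Real.exp_le_one_iff.mpr (by nlinarith)
        have hyp : y ^ (m1 + s) ≤ Δ ^ (m1 + s) := pow_le_pow_left₀ hy0 hy.2 _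
        have : y ^ (m1 + s) * Real.exp (-(lY * y)) ≤ Δ ^ (m1 + s) := by nlinarith [pow_nonneg hy0 (m1+s), Real.exp_pos (-(lY*y))]
        have hcs : 0 ≤ c ^ s / (Nat.factorial s : ℝ) := by positivity
        nlinarith
      calc ∫⁻ y in Ioc (0:ℝ) Δ, ‖f s y‖₊ ∂volume
          ≤ ∫⁻ _ in Ioc (0:ℝ) Δ, ENNReal.ofReal (c ^ s / (Nat.factorial s : ℝ) * Δ ^ (m1 + s)) ∂volume :=
            setLIntegral_mono' measurableSet_Ioc h2
        _ = ENNReal.ofReal (c ^ s / (Nat.factorial s : ℝ) * Δ ^ (m1 + s)) * volume (Ioc (0:ℝ) Δ) :=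
            setLIntegral_const _ _
        _ ≤ ENNReal.ofReal (c ^ s / (Nat.factorial s : ℝ) * Δ ^ (m1 + s) * Δ) := by
            rw [Real.volume_Ioc, sub_zero, ← ENNReal.ofReal_mul (by positivity)]
    have hsum : Summable (fun s : ℕ => c ^ s / (Nat.factorial s : ℝ) * Δ ^ (m1 + s) * Δ) := by
      have h := (Real.summable_pow_div_factorial (c * Δ)).mul_left (Δ ^ m1 * Δ)
      apply h.congr
      intro s
      rw [mul_pow, pow_add]
      field_simp
    have hfin : ∑' s : ℕ, ∫⁻ y in Ioc (0:ℝ) Δ, ‖f s y‖₊ ∂volume < ⊤ := calc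
      ∑' s : ℕ, ∫⁻ y in Ioc (0:ℝ) Δ, ‖f s y‖₊ ∂volume
        ≤ ∑' s : ℕ, ENNReal.ofReal (c ^ s / (Nat.factorial s : ℝ) * Δ ^ (m1 + s) * Δ) :=
          ENNReal.tsum_le_tsum h1
      _ = ENNReal.ofReal (∑' s : ℕ, c ^ s / (Nat.factorial s : ℝ) * Δ ^ (m1 + s) * Δ) :=
          (ENNReal.ofReal_tsum_of_nonneg (fun s => by positivity) hsum).symm
      _ < ⊤ := ENNReal.ofReal_lt_top
    exact hfin.ne
  rw [integral_tsum hmeas hbound]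
  refine tsum_congr fun s => ?_
  simp only [hf]
  rw [MeasureTheory.integral_const_mul]
  congr 1
  rw [← intervalIntegral.integral_of_le hΔ.le, integral_interval_pow_exp_LIG hlY (m1 + s) Δ]


end Helpers

set_option maxHeartbeats 2000000 in
/-- Lemma 2 of the paper: closed-form CDF of the saturated-regime relay SNR
(written as the event `X > (Y − Λ1)/Λ2`) jointly with the saturation event
`Px·X + Py·Y > Pth` of the nonlinear energy harvester, where `X` and `Y` are
independent Gamma random variables (Nakagami-m fading with integer shapes);
the inner infinite series converges absolutely. -/
theorem stmt_9 {Ω : Type*} [MeasurableSpace Ω]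
    (ℙ : Measure Ω) [IsProbabilityMeasure ℙ]
    (X Y : Ω → ℝ) (hmX : Measurable X) (hmY : Measurable Y)
    (hindep : ProbabilityTheory.IndepFun X Y ℙ)
    (mX mY : ℕ) (hmX1 : 0 < mX) (hmY1 : 0 < mY)
    (ΩX ΩY : ℝ) (hΩX : 0 < ΩX) (hΩY : 0 < ΩY)
    (hXgamma : Measure.map X ℙ = ProbabilityTheory.gammaMeasure mX (mX / ΩX))
    (hYgamma : Measure.map Y ℙ = ProbabilityTheory.gammaMeasure mY (mY / ΩY))
    (Px Py Pth Λ1 Λ2 : ℝ)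
    (hPx : 0 < Px) (hPy : 0 < Py) (hPth : 0 < Pth) (hΛ1 : 0 < Λ1) (hΛ2 : 0 < Λ2)
    (Δ2 : ℝ) (hΔ2 : Δ2 = (Λ2 * Pth + Λ1 * Px) / (Px + Py * Λ2))
    (hΛ1Pth : Py * Λ1 ≤ Pth) :
    (∀ p ∈ range mX, ∀ n ∈ range (p + 1),
      Summable (fun s : ℕ =>
        |((mX * Py / (ΩX * Px) : ℝ) ^ s / (Nat.factorial s : ℝ)) *
          lowerIncGamma ((mY : ℝ) + p + s - n) ((mY / ΩY) * Δ2) *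
          (((mY / ΩY : ℝ)) ^ (mY + p + s - n))⁻¹|)) ∧
    (ℙ {ω | X ω > (Y ω - Λ1) / Λ2 ∧ Px * X ω + Py * Y ω > Pth}).toReal =
      (∑ k ∈ range mX, (1 / (Nat.factorial k : ℝ)) * (mX / (ΩX * Λ2) : ℝ) ^ k *
        ∑ q ∈ range (k + 1), (Nat.choose k q : ℝ) * (-Λ1) ^ (k - q) *
          Real.exp (mX * Λ1 / (ΩX * Λ2)) *
          ((mY / ΩY : ℝ) ^ mY / Real.Gamma mY) *
          upperIncGamma ((mY : ℝ) + q) ((mY / ΩY + mX / (ΩX * Λ2)) * Δ2) *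
          (((mY / ΩY + mX / (ΩX * Λ2) : ℝ)) ^ (mY + q))⁻¹)
      + ∑ p ∈ range mX, (1 / (Nat.factorial p : ℝ)) * (mX / (ΩX * Px) : ℝ) ^ p *
          ∑ n ∈ range (p + 1), (Nat.choose p n : ℝ) * Pth ^ n * (-Py) ^ (p - n) *
            ((mY / ΩY : ℝ) ^ mY / Real.Gamma mY) *
            Real.exp (-(mX * Pth / (ΩX * Px))) *
            ∑' s : ℕ, ((mX * Py / (ΩX * Px) : ℝ) ^ s / (Nat.factorial s : ℝ)) *
              lowerIncGamma ((mY : ℝ) + p + s - n) ((mY / ΩY) * Δ2) *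
              (((mY / ΩY : ℝ)) ^ (mY + p + s - n))⁻¹ := by
  obtain ⟨mx, rfl⟩ := Nat.exists_eq_succ_of_ne_zero hmX1.ne'
  obtain ⟨my, rfl⟩ := Nat.exists_eq_succ_of_ne_zero hmY1.ne'
  have hmxpos : (0:ℝ) < ((mx + 1 : ℕ) : ℝ) := by exact_mod_cast Nat.succ_pos mx
  have hmypos : (0:ℝ) < ((my + 1 : ℕ) : ℝ) := by exact_mod_cast Nat.succ_pos my
  have hlX : (0:ℝ) < ((mx + 1 : ℕ) : ℝ) / ΩX := div_pos hmxpos hΩX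
  have hlY : (0:ℝ) < ((my + 1 : ℕ) : ℝ) / ΩY := div_pos hmypos hΩY
  have hden : (0:ℝ) < Px + Py * Λ2 := by positivity
  have hΔpos : 0 < Δ2 := by rw [hΔ2]; positivity
  have hkey : Δ2 * (Px + Py * Λ2) = Λ2 * Pth + Λ1 * Px := by
    rw [hΔ2]; field_simp
  have hΛ1Δ : Λ1 ≤ Δ2 := by nlinarith
  have hPyΔ : Py * Δ2 ≤ Pth := by nlinarith
  have hc' : (0:ℝ) < ((mx + 1 : ℕ) : ℝ) * Py / (ΩX * Px) := by positivity
  constructor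
  · -- summability
    intro p hp n hn
    have hnp : n ≤ p := Nat.lt_succ_iff.mp (mem_range.mp hn)
    set c' : ℝ := ((mx + 1 : ℕ) : ℝ) * Py / (ΩX * Px) with hc'def
    apply Summable.of_nonneg_of_le (fun s => abs_nonneg _) ?_
      ((Real.summable_pow_div_factorial (c' * Δ2)).mul_left (Δ2 ^ (my + 1 + p - n)))
    intro s
    have hcast1 : ((my + 1 : ℕ) : ℝ) + p + s - n = (((my + (p - n) + s) + 1 : ℕ) : ℝ) := by
      push_cast [Nat.cast_sub hnp]; ring
    have hcast2 : (my + 1 + p + s - n : ℕ) = (my + (p - n) + s) + 1 := by omega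
    rw [hcast1, hcast2, mul_assoc,
      abs_of_nonneg (mul_nonneg (by positivity) (LIG_nonneg hlY _ hΔpos.le))]
    have hle := LIG_le hlY (my + (p - n) + s) hΔpos.le
    calc c' ^ s / (Nat.factorial s : ℝ) *
          (lowerIncGamma (((my + (p - n) + s) + 1 : ℕ) : ℝ) (((my + 1 : ℕ) : ℝ) / ΩY * Δ2) *
            ((((my + 1 : ℕ) : ℝ) / ΩY) ^ ((my + (p - n) + s) + 1))⁻¹)
        ≤ c' ^ s / (Nat.factorial s : ℝ) * Δ2 ^ ((my + (p - n) + s) + 1) := by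
          apply mul_le_mul_of_nonneg_left hle (by positivity)
      _ = Δ2 ^ (my + 1 + p - n) * ((c' * Δ2) ^ s / (Nat.factorial s : ℝ)) := by
          have he : (my + (p - n) + s) + 1 = (my + 1 + p - n) + s := by omega
          rw [he, pow_add, mul_pow]
          ring
  · -- main equality
    set t : ℝ → ℝ := fun y => max ((y - Λ1) / Λ2) ((Pth - Py * y) / Px) with htdef
    have ht0 : ∀ y, 0 ≤ t y := by
      intro y
      rcases le_total y Λ1 with h | h
      · refine le_max_of_le_right (div_nonneg ?_ hPx.le)
        nlinarith
      · exact le_max_of_le_left (div_nonneg (by linarith) hΛ2.le)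
    have htcont : Continuous t :=
      Continuous.max ((continuous_id.sub continuous_const).div_const Λ2)
        ((continuous_const.sub (continuous_const.mul continuous_id)).div_const Px)
    have htgt : ∀ y, Δ2 < y → t y = (y - Λ1) / Λ2 := by
      intro y hy
      apply max_eq_left
      rw [div_le_div_iff₀ hPx hΛ2]
      nlinarith
    have htle : ∀ y, y ≤ Δ2 → t y = (Pth - Py * y) / Px := by
      intro y hy
      apply max_eq_right
      rw [div_le_div_iff₀ hΛ2 hPx]
      nlinarith
    set g0 : ℝ → ℝ := fun y =>
      ProbabilityTheory.gammaPDFReal ((my + 1 : ℕ) : ℝ) (((my + 1 : ℕ) : ℝ) / ΩY) y *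
        erlangS (((mx + 1 : ℕ) : ℝ) / ΩX) (mx + 1) (t y) with hg0
    have hmeasg0 : AEStronglyMeasurable g0 volume :=
      ((ProbabilityTheory.measurable_gammaPDFReal _ _).mul
        ((erlangS_continuous _ _).comp htcont).measurable).aestronglyMeasurable
    have hg0nn : ∀ y, 0 ≤ g0 y := fun y =>
      mul_nonneg (ProbabilityTheory.gammaPDFReal_nonneg hmypos hlY y)
        (erlangS_nonneg hlX.le (ht0 y))
    have hg0le : ∀ y, ‖g0 y‖ ≤
        ProbabilityTheory.gammaPDFReal ((my + 1 : ℕ) : ℝ) (((my + 1 : ℕ) : ℝ) / ΩY) y := by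
      intro y
      rw [Real.norm_eq_abs, abs_of_nonneg (hg0nn y)]
      calc g0 y ≤ ProbabilityTheory.gammaPDFReal _ _ y * 1 := by
            exact mul_le_mul_of_nonneg_left (erlangS_le_one hlX mx (ht0 y))
              (ProbabilityTheory.gammaPDFReal_nonneg hmypos hlY y)
        _ = _ := mul_one _
    have hIntg0 : Integrable g0 volume :=
      (integrable_gammaPDFReal hmypos hlY).mono' hmeasg0 (Filter.Eventually.of_forall hg0le)
    have hs : MeasurableSet {p : ℝ × ℝ | p.1 > (p.2 - Λ1) / Λ2 ∧ Px * p.1 + Py * p.2 > Pth} := by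
      have : {p : ℝ × ℝ | p.1 > (p.2 - Λ1) / Λ2 ∧ Px * p.1 + Py * p.2 > Pth} =
          {p : ℝ × ℝ | (p.2 - Λ1) / Λ2 < p.1} ∩ {p : ℝ × ℝ | Pth < Px * p.1 + Py * p.2} := rfl
      rw [this]
      exact (measurableSet_lt ((measurable_snd.sub measurable_const).div_const _) measurable_fst).inter
        (measurableSet_lt measurable_const ((measurable_fst.const_mul _).add (measurable_snd.const_mul _)))
    haveI hPX : IsProbabilityMeasure
        (ProbabilityTheory.gammaMeasure ((mx + 1 : ℕ) : ℝ) (((mx + 1 : ℕ) : ℝ) / ΩX)) :=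
      ProbabilityTheory.isProbabilityMeasure_gammaMeasure hmxpos hlX
    haveI hPY : IsProbabilityMeasure
        (ProbabilityTheory.gammaMeasure ((my + 1 : ℕ) : ℝ) (((my + 1 : ℕ) : ℝ) / ΩY)) :=
      ProbabilityTheory.isProbabilityMeasure_gammaMeasure hmypos hlY
    have hpair : Measurable fun ω => (X ω, Y ω) := hmX.prodMk hmY
    have hmapeq := (ProbabilityTheory.indepFun_iff_map_prod_eq_prod_map_map
      hmX.aemeasurable hmY.aemeasurable).mp hindep
    have h1 : ℙ {ω | X ω > (Y ω - Λ1) / Λ2 ∧ Px * X ω + Py * Y ω > Pth} =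
        (ProbabilityTheory.gammaMeasure ((mx + 1 : ℕ) : ℝ) (((mx + 1 : ℕ) : ℝ) / ΩX)).prod
          (ProbabilityTheory.gammaMeasure ((my + 1 : ℕ) : ℝ) (((my + 1 : ℕ) : ℝ) / ΩY))
          {p : ℝ × ℝ | p.1 > (p.2 - Λ1) / Λ2 ∧ Px * p.1 + Py * p.2 > Pth} := by
      have hev : {ω | X ω > (Y ω - Λ1) / Λ2 ∧ Px * X ω + Py * Y ω > Pth} =
          (fun ω => (X ω, Y ω)) ⁻¹'
            {p : ℝ × ℝ | p.1 > (p.2 - Λ1) / Λ2 ∧ Px * p.1 + Py * p.2 > Pth} := rfl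
      rw [hev, ← Measure.map_apply hpair hs, hmapeq, hXgamma, hYgamma]
    have hsec : ∀ y : ℝ, ((fun x => (x, y)) ⁻¹'
        {p : ℝ × ℝ | p.1 > (p.2 - Λ1) / Λ2 ∧ Px * p.1 + Py * p.2 > Pth}) = Set.Ioi (t y) := by
      intro y
      ext x
      simp only [Set.mem_preimage, Set.mem_setOf_eq, Set.mem_Ioi, htdef, gt_iff_lt, max_lt_iff]
      constructor
      · rintro ⟨ha, hb⟩
        exact ⟨ha, by rw [div_lt_iff₀ hPx]; linarith⟩
      · rintro ⟨ha, hb⟩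
        rw [div_lt_iff₀ hPx] at hb
        exact ⟨ha, by linarith⟩
    have h2 : (ℙ {ω | X ω > (Y ω - Λ1) / Λ2 ∧ Px * X ω + Py * Y ω > Pth}).toReal =
        ∫ y, g0 y := by
      rw [h1, Measure.prod_apply_symm hs]
      have h3 : ∀ y : ℝ, ProbabilityTheory.gammaMeasure ((mx + 1 : ℕ) : ℝ)
            (((mx + 1 : ℕ) : ℝ) / ΩX) ((fun x => (x, y)) ⁻¹'
            {p : ℝ × ℝ | p.1 > (p.2 - Λ1) / Λ2 ∧ Px * p.1 + Py * p.2 > Pth}) =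
          ENNReal.ofReal (erlangS (((mx + 1 : ℕ) : ℝ) / ΩX) (mx + 1) (t y)) := by
        intro y
        rw [hsec y]
        exact gammaMeasure_Ioi hlX mx (ht0 y)
      have hgmeas : Measurable fun y : ℝ =>
          ENNReal.ofReal (erlangS (((mx + 1 : ℕ) : ℝ) / ΩX) (mx + 1) (t y)) := by
        exact (((erlangS_continuous _ _).comp htcont)).measurable.ennreal_ofReal
      have hfmeas : Measurable
          (ProbabilityTheory.gammaPDF ((my + 1 : ℕ) : ℝ) (((my + 1 : ℕ) : ℝ) / ΩY)) := by
        exact (ProbabilityTheory.measurable_gammaPDFReal _ _).ennreal_ofReal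
      rw [lintegral_congr h3, ProbabilityTheory.gammaMeasure,
        lintegral_withDensity_eq_lintegral_mul _ hfmeas hgmeas]
      have h4 : ∀ y : ℝ, (ProbabilityTheory.gammaPDF ((my + 1 : ℕ) : ℝ) (((my + 1 : ℕ) : ℝ) / ΩY) *
          fun y => ENNReal.ofReal (erlangS (((mx + 1 : ℕ) : ℝ) / ΩX) (mx + 1) (t y))) y =
          ENNReal.ofReal (g0 y) := by
        intro y
        simp only [Pi.mul_apply, ProbabilityTheory.gammaPDF, hg0]
        rw [← ENNReal.ofReal_mul (ProbabilityTheory.gammaPDFReal_nonneg hmypos hlY y)]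
      rw [lintegral_congr h4,
        ← ofReal_integral_eq_lintegral_ofReal hIntg0 (Filter.Eventually.of_forall hg0nn),
        ENNReal.toReal_ofReal (integral_nonneg hg0nn)]
    set lY : ℝ := ((my + 1 : ℕ) : ℝ) / ΩY with hlYdef
    set B : ℝ := ((mx + 1 : ℕ) : ℝ) / (ΩX * Λ2) with hBdef
    have hBpos : 0 < B := by rw [hBdef]; positivity
    have hlYB : 0 < lY + B := by positivity
    set cA : ℕ → ℕ → ℝ := fun k q => 1 / (Nat.factorial k : ℝ) * B ^ k * (Nat.choose k q : ℝ) *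
      (-Λ1) ^ (k - q) * Real.exp (((mx + 1 : ℕ) : ℝ) * Λ1 / (ΩX * Λ2)) *
      (lY ^ (my + 1) / (Nat.factorial my : ℝ)) with hcAdef
    have hptA : Set.EqOn g0 (fun y => ∑ k ∈ range (mx + 1), ∑ q ∈ range (k + 1),
        cA k q * (y ^ (my + q) * Real.exp (-((lY + B) * y)))) (Set.Ioi Δ2) := by
      intro y hy
      have hyΔ : Δ2 < y := hy
      have hy0 : (0:ℝ) < y := lt_trans hΔpos hyΔ
      simp only [hg0]
      rw [gammaPDFReal_nat my hy0.le, htgt y hyΔ]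
      unfold erlangS
      rw [Finset.mul_sum]
      refine Finset.sum_congr rfl fun k hk => ?_
      have hu : ((mx + 1 : ℕ) : ℝ) / ΩX * ((y - Λ1) / Λ2) = B * (y - Λ1) := by
        rw [hBdef]; field_simp
      rw [← mul_pow, hu]
      have hsplit : (y - Λ1) ^ k = ∑ q ∈ range (k + 1),
          y ^ q * (-Λ1) ^ (k - q) * ((Nat.choose k q : ℕ) : ℝ) := by
        rw [show y - Λ1 = y + (-Λ1) by ring, add_pow]
      rw [mul_pow, hsplit, Finset.mul_sum, Finset.sum_div, Finset.sum_mul, Finset.mul_sum]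
      refine Finset.sum_congr rfl fun q hq => ?_
      have hexp : Real.exp (-(lY * y)) * Real.exp (-(B * (y - Λ1))) =
          Real.exp (((mx + 1 : ℕ) : ℝ) * Λ1 / (ΩX * Λ2)) * Real.exp (-((lY + B) * y)) := by
        rw [← Real.exp_add, ← Real.exp_add]
        congr 1
        rw [hBdef]
        ring
      simp only [hcAdef]
      rw [pow_add]
      linear_combination (lY ^ (my + 1) / (Nat.factorial my : ℝ) * y ^ my * B ^ k *
        (y ^ q * (-Λ1) ^ (k - q) * ((Nat.choose k q : ℕ) : ℝ)) / (Nat.factorial k : ℝ)) * hexp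
    have hintA : ∀ k q : ℕ, IntegrableOn
        (fun y => cA k q * (y ^ (my + q) * Real.exp (-((lY + B) * y)))) (Set.Ioi Δ2) volume :=
      fun k q => (integrableOn_pow_exp hlYB (my + q) hΔpos.le).const_mul _
    have hA : ∫ y in Set.Ioi Δ2, g0 y = ∑ k ∈ range (mx + 1),
        1 / (Nat.factorial k : ℝ) * (((mx + 1 : ℕ) : ℝ) / (ΩX * Λ2)) ^ k *
        ∑ q ∈ range (k + 1), (Nat.choose k q : ℝ) * (-Λ1) ^ (k - q) *
          Real.exp (((mx + 1 : ℕ) : ℝ) * Λ1 / (ΩX * Λ2)) *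
          ((((my + 1 : ℕ) : ℝ) / ΩY) ^ (my + 1) / Real.Gamma ((my + 1 : ℕ) : ℝ)) *
          upperIncGamma (((my + 1 : ℕ) : ℝ) + q) ((((my + 1 : ℕ) : ℝ) / ΩY +
            ((mx + 1 : ℕ) : ℝ) / (ΩX * Λ2)) * Δ2) *
          (((((my + 1 : ℕ) : ℝ) / ΩY + ((mx + 1 : ℕ) : ℝ) / (ΩX * Λ2))) ^ ((my + 1) + q))⁻¹ := by
      rw [setIntegral_congr_fun measurableSet_Ioi hptA]
      rw [MeasureTheory.integral_finset_sum _ (fun k _ => integrable_finset_sum _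
        (fun q _ => hintA k q))]
      refine Finset.sum_congr rfl fun k hk => ?_
      rw [MeasureTheory.integral_finset_sum _ (fun q _ => hintA k q), Finset.mul_sum]
      refine Finset.sum_congr rfl fun q hq => ?_
      rw [MeasureTheory.integral_const_mul, integral_Ioi_pow_exp_UIG hlYB (my + q) hΔpos.le]
      have hcast : ((my + q + 1 : ℕ) : ℝ) = ((my + 1 : ℕ) : ℝ) + q := by push_cast; ring
      have hG : Real.Gamma ((my + 1 : ℕ) : ℝ) = (Nat.factorial my : ℝ) := by
        have h : (((my + 1 : ℕ)) : ℝ) = (my : ℝ) + 1 := by push_cast; ring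
        rw [h, Real.Gamma_nat_eq_factorial]
      have hpow : (my + 1) + q = my + q + 1 := by omega
      rw [hcast, hG, hpow]
      simp only [hcAdef, hlYdef, hBdef]
      ring
    set G : ℝ := ((mx + 1 : ℕ) : ℝ) / (ΩX * Px) with hGdef
    set C2 : ℝ := ((mx + 1 : ℕ) : ℝ) * Py / (ΩX * Px) with hC2def
    have hC2 : 0 < C2 := by rw [hC2def]; positivity
    set dB : ℕ → ℕ → ℝ := fun p n => 1 / (Nat.factorial p : ℝ) * G ^ p * (Nat.choose p n : ℝ) *
      Pth ^ n * (-Py) ^ (p - n) * (lY ^ (my + 1) / (Nat.factorial my : ℝ)) *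
      Real.exp (-(((mx + 1 : ℕ) : ℝ) * Pth / (ΩX * Px))) with hdBdef
    have hIic : ∫ y in Set.Iic Δ2, g0 y = ∫ y in Set.Ioc (0:ℝ) Δ2, g0 y := by
      have hun : Set.Iic Δ2 = Set.Ioc (0:ℝ) Δ2 ∪ Set.Iic 0 := by
        rw [Set.union_comm, Set.Iic_union_Ioc_eq_Iic hΔpos.le]
      rw [hun, integral_union_eq_left_of_ae]
      rw [MeasureTheory.ae_restrict_iff' measurableSet_Iic]
      have hne : ∀ᵐ y : ℝ ∂volume, y ≠ 0 := by
        refine ae_iff.mpr ?_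
        simp only [ne_eq, not_not]
        have h : {y : ℝ | y = 0} = {(0:ℝ)} := by ext; simp
        rw [h]
        exact measure_singleton 0
      filter_upwards [hne] with y hy hyle
      have hylt : y < 0 := lt_of_le_of_ne hyle hy
      simp only [hg0]
      rw [ProbabilityTheory.gammaPDFReal, if_neg (not_le.mpr hylt), zero_mul]
    have hptB : Set.EqOn g0 (fun y => ∑ p ∈ range (mx + 1), ∑ n ∈ range (p + 1),
        dB p n * (y ^ (my + (p - n)) * Real.exp (-(lY * y)) * Real.exp (C2 * y)))
        (Set.Ioc (0:ℝ) Δ2) := by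
      intro y hy
      have hy0 : (0:ℝ) < y := hy.1
      have hyΔ : y ≤ Δ2 := hy.2
      simp only [hg0]
      rw [gammaPDFReal_nat my hy0.le, htle y hyΔ]
      unfold erlangS
      rw [Finset.mul_sum]
      refine Finset.sum_congr rfl fun p hp => ?_
      have hu : ((mx + 1 : ℕ) : ℝ) / ΩX * ((Pth - Py * y) / Px) = G * (Pth - Py * y) := by
        rw [hGdef]; field_simp
      rw [← mul_pow, hu]
      have hsplit : (Pth - Py * y) ^ p = ∑ n ∈ range (p + 1),
          Pth ^ n * ((-Py) * y) ^ (p - n) * ((Nat.choose p n : ℕ) : ℝ) := by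
        rw [show Pth - Py * y = Pth + (-Py) * y by ring, add_pow]
      rw [mul_pow, hsplit, Finset.mul_sum, Finset.sum_div, Finset.sum_mul, Finset.mul_sum]
      refine Finset.sum_congr rfl fun n hn => ?_
      have hexp : Real.exp (-(G * (Pth - Py * y))) =
          Real.exp (-(((mx + 1 : ℕ) : ℝ) * Pth / (ΩX * Px))) * Real.exp (C2 * y) := by
        rw [← Real.exp_add]
        congr 1
        rw [hGdef, hC2def]
        ring
      simp only [hdBdef]
      rw [mul_pow, pow_add]
      linear_combination (lY ^ (my + 1) / (Nat.factorial my : ℝ) * y ^ my *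
        Real.exp (-(lY * y)) * G ^ p * Pth ^ n * ((-Py) ^ (p - n) * y ^ (p - n)) *
        ((Nat.choose p n : ℕ) : ℝ) / (Nat.factorial p : ℝ)) * hexp
    have hintB : ∀ p n : ℕ, IntegrableOn
        (fun y => dB p n * (y ^ (my + (p - n)) * Real.exp (-(lY * y)) * Real.exp (C2 * y)))
        (Set.Ioc (0:ℝ) Δ2) volume := by
      intro p n
      apply Continuous.integrableOn_Ioc
      exact continuous_const.mul (((continuous_pow _).mul
        ((continuous_const.mul continuous_id).neg.rexp)).mul
        ((continuous_const.mul continuous_id).rexp))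
    have hB : ∫ y in Set.Iic Δ2, g0 y = ∑ p ∈ range (mx + 1),
        1 / (Nat.factorial p : ℝ) * (((mx + 1 : ℕ) : ℝ) / (ΩX * Px)) ^ p *
        ∑ n ∈ range (p + 1), (Nat.choose p n : ℝ) * Pth ^ n * (-Py) ^ (p - n) *
          ((((my + 1 : ℕ) : ℝ) / ΩY) ^ (my + 1) / Real.Gamma ((my + 1 : ℕ) : ℝ)) *
          Real.exp (-(((mx + 1 : ℕ) : ℝ) * Pth / (ΩX * Px))) *
          ∑' s : ℕ, ((((mx + 1 : ℕ) : ℝ) * Py / (ΩX * Px)) ^ s / (Nat.factorial s : ℝ)) *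
            lowerIncGamma (((my + 1 : ℕ) : ℝ) + p + s - n) ((((my + 1 : ℕ) : ℝ) / ΩY) * Δ2) *
            (((((my + 1 : ℕ) : ℝ) / ΩY)) ^ (my + 1 + p + s - n))⁻¹ := by
      rw [hIic, setIntegral_congr_fun measurableSet_Ioc hptB,
        MeasureTheory.integral_finset_sum _ (fun p _ => integrable_finset_sum _
          (fun n _ => hintB p n))]
      refine Finset.sum_congr rfl fun p hp => ?_
      rw [MeasureTheory.integral_finset_sum _ (fun n _ => hintB p n), Finset.mul_sum]
      refine Finset.sum_congr rfl fun n hn => ?_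
      have hnp : n ≤ p := Nat.lt_succ_iff.mp (mem_range.mp hn)
      rw [MeasureTheory.integral_const_mul, termB_inner hlY hC2 hΔpos (my + (p - n))]
      have hG : Real.Gamma ((my + 1 : ℕ) : ℝ) = (Nat.factorial my : ℝ) := by
        have h : (((my + 1 : ℕ)) : ℝ) = (my : ℝ) + 1 := by push_cast; ring
        rw [h, Real.Gamma_nat_eq_factorial]
      have htseq : ∑' s : ℕ, ((((mx + 1 : ℕ) : ℝ) * Py / (ΩX * Px)) ^ s / (Nat.factorial s : ℝ)) *
            lowerIncGamma (((my + 1 : ℕ) : ℝ) + p + s - n) ((((my + 1 : ℕ) : ℝ) / ΩY) * Δ2) *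
            (((((my + 1 : ℕ) : ℝ) / ΩY)) ^ (my + 1 + p + s - n))⁻¹ =
          ∑' s : ℕ, (C2 ^ s / (Nat.factorial s : ℝ)) *
            (lowerIncGamma ((my + (p - n) + s + 1 : ℕ) : ℝ) (lY * Δ2) *
              (lY ^ (my + (p - n) + s + 1))⁻¹) := by
        refine tsum_congr fun s => ?_
        have hc1 : ((my + 1 : ℕ) : ℝ) + p + s - n = ((my + (p - n) + s + 1 : ℕ) : ℝ) := by
          push_cast [Nat.cast_sub hnp]; ring
        have hc2 : (my + 1 + p + s - n : ℕ) = my + (p - n) + s + 1 := by omega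
        rw [hc1, hc2, hC2def, hlYdef, mul_assoc]
      rw [htseq, hG]
      simp only [hdBdef, hGdef]
      ring
    rw [h2, ← intervalIntegral.integral_Iic_add_Ioi (b := Δ2) hIntg0.integrableOn hIntg0.integrableOn,
      hA, hB]
    exact add_comm _ _
end
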